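/- arXiv:1711.07109 — 4 statements merged into one kernel-verified Lean document; each statement's English description precedes it below -/
import Mathlib

section
/- (Hopf's Lemma, possibly sign-changing zeroth order coefficient.) Let Ω ⊂ ℝⁿ be open, let c : Ω → ℝ be continuous and bounded, and let u ∈ C²(Ω) ∩ C¹(closure(Ω)) satisfy Δu(x) + c(x)u(x) ≥ 0 for all x ∈ Ω and u(x) < 0 for all x ∈ Ω. Suppose x₀ ∈ ∂Ω with u(x₀) = 0 and there exist y ∈ Ω and ρ > 0 such that the open ball B_ρ(y) is contained in Ω and x₀ ∈ ∂B_ρ(y). Then the directional derivative of u at x₀ in the direction ν = (x₀ − y)/ρ is strictly positive: ∂u/∂ν(x₀) > 0. -/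
open Metric Set

/-- The Laplacian `Δu(x) = ∑ ∂²u/∂xᵢ²` of a function on Euclidean space. -/
noncomputable def lapl {n : ℕ} (u : EuclideanSpace ℝ (Fin n) → ℝ)
    (x : EuclideanSpace ℝ (Fin n)) : ℝ :=
  ∑ i : Fin n,
    iteratedFDeriv ℝ 2 u x ![EuclideanSpace.single i 1, EuclideanSpace.single i 1]

section Aux
open Filter RealInnerProductSpace
variable {n : ℕ}
local notation "E" => EuclideanSpace ℝ (Fin n)

noncomputable def innerR (n : ℕ) : E →L[ℝ] E →L[ℝ] ℝ := innerSL ℝ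

lemma innerR_apply (v w : E) : innerR n v w = ⟪v, w⟫ := rfl

noncomputable def gaussD (α : ℝ) (y z : E) : E →L[ℝ] ℝ :=
  (-2*α*Real.exp (-α*‖z-y‖^2)) • innerR n (z-y)

lemma gaussD_apply (α : ℝ) (y z h : E) :
    gaussD α y z h = (-2*α*Real.exp (-α*‖z-y‖^2)) * ⟪z - y, h⟫ := by
  simp only [gaussD, ContinuousLinearMap.coe_smul', Pi.smul_apply, smul_eq_mul, innerR_apply]

lemma hasFDerivAt_gauss (α : ℝ) (y x : E) :
    HasFDerivAt (fun z : E => Real.exp (-α*‖z-y‖^2)) (gaussD α y x) x := by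
  have h1 : HasFDerivAt (fun z : E => ‖z-y‖^2) (2 • (innerSL ℝ (x-y))) x := by
    have := ((hasFDerivAt_id x).sub_const y).norm_sq
    simpa using this
  have h2 : HasFDerivAt (fun z : E => -α*‖z-y‖^2) ((-α) • (2 • (innerSL ℝ (x-y)))) x :=
    h1.const_mul (-α)
  have h3 := h2.exp
  have he : Real.exp (-α*‖x-y‖^2) • ((-α) • (2 • (innerSL ℝ (x-y)))) = gaussD α y x := by
    ext h
    rw [gaussD_apply]
    simp only [ContinuousLinearMap.coe_smul', Pi.smul_apply, smul_eq_mul,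
      ContinuousLinearMap.smul_apply, innerSL_apply_apply, nsmul_eq_mul, Nat.cast_ofNat]
    ring
  rwa [he] at h3

noncomputable def gaussD2 (α : ℝ) (y x : E) : E →L[ℝ] E →L[ℝ] ℝ :=
  ((-2*α) • gaussD α y x).smulRight (innerR n (x-y))
  + (-2*α*Real.exp (-α*‖x-y‖^2)) • innerR n

lemma hasFDerivAt_gaussD (α : ℝ) (y x : E) :
    HasFDerivAt (gaussD α y) (gaussD2 α y x) x := by
  have hA : HasFDerivAt (fun z : E => innerR n (z - y)) (innerR n) x := by
    have hc := (innerR n).hasFDerivAt.comp x ((hasFDerivAt_id x).sub_const y)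
    simpa [Function.comp_def] using hc
  have hg : HasFDerivAt (fun z : E => -2*α*Real.exp (-α*‖z-y‖^2))
      ((-2*α) • gaussD α y x) x := (hasFDerivAt_gauss α y x).const_mul (-2*α)
  have h := hg.smul hA
  rw [add_comm] at h
  exact h

lemma gaussD2_apply (α : ℝ) (y x h k : E) :
    gaussD2 α y x h k
      = -2*α*Real.exp (-α*‖x-y‖^2) * ⟪h, k⟫
        + 4*α^2*Real.exp (-α*‖x-y‖^2) * ⟪x-y, h⟫ * ⟪x-y, k⟫ := by
  simp only [gaussD2, ContinuousLinearMap.add_apply, ContinuousLinearMap.smulRight_apply,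
    ContinuousLinearMap.coe_smul', Pi.smul_apply, smul_eq_mul, innerR_apply, gaussD_apply]
  ring

lemma lapl_eq_sum (u : E → ℝ) (x : E) :
    lapl u x = ∑ i : Fin n, fderiv ℝ (fderiv ℝ u) x (EuclideanSpace.single i 1)
      (EuclideanSpace.single i 1) := by
  unfold lapl
  refine Finset.sum_congr rfl fun i _ => ?_
  rw [iteratedFDeriv_two_apply]
  rfl

lemma lapl_barrier (α : ℝ) (y x : E) (C : ℝ) :
    lapl (fun z : E => Real.exp (-α*‖z-y‖^2) - C) x
      = Real.exp (-α*‖x-y‖^2) * (4*α^2*‖x-y‖^2 - 2*α*n) := by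
  rw [lapl_eq_sum]
  have hfd : (fderiv ℝ (fun z : E => Real.exp (-α*‖z-y‖^2) - C)) = gaussD α y :=
    funext fun z => ((hasFDerivAt_gauss α y z).sub_const C).fderiv
  rw [hfd]
  have h2 : fderiv ℝ (gaussD α y) x = gaussD2 α y x := (hasFDerivAt_gaussD α y x).fderiv
  rw [h2]
  have hsum : ∀ i : Fin n, gaussD2 α y x (EuclideanSpace.single i 1) (EuclideanSpace.single i 1)
      = -2*α*Real.exp (-α*‖x-y‖^2) + 4*α^2*Real.exp (-α*‖x-y‖^2) * ((x-y) i)^2 := by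
    intro i
    rw [gaussD2_apply]
    simp only [EuclideanSpace.inner_single_right, starRingEnd_apply, star_trivial,
      EuclideanSpace.single_apply, if_pos rfl, if_true, one_mul, mul_one]
    ring
  rw [Finset.sum_congr rfl fun i _ => hsum i]
  rw [Finset.sum_add_distrib, Finset.sum_const, ← Finset.mul_sum]
  have hn2 : ∑ i : Fin n, ((x-y) i)^2 = ‖x-y‖^2 := by
    have := real_inner_self_eq_norm_sq (x - y)
    rw [PiLp.inner_apply] at this
    simp only [RCLike.inner_apply, starRingEnd_apply, star_trivial] at this
    rw [← this]
    exact Finset.sum_congr rfl fun i _ => sq ((x-y) i)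
  rw [hn2]
  simp only [Finset.card_univ, Fintype.card_fin, nsmul_eq_mul]
  ring

lemma sdt {g g' : ℝ → ℝ} {L δ : ℝ} (hδ : 0 < δ)
    (hg : ∀ t ∈ Ioo (-δ) δ, HasDerivAt g (g' t) t)
    (hg' : HasDerivAt g' L 0)
    (hmax : ∀ t ∈ Ioo (-δ) δ, g t ≤ g 0) : L ≤ 0 := by
  have h0 : (0:ℝ) ∈ Ioo (-δ) δ := by constructor <;> simp [hδ]
  have hlm : IsLocalMax g 0 := by
    have : Ioo (-δ) δ ∈ nhds (0:ℝ) := Ioo_mem_nhds (by linarith) hδ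
    exact Filter.eventually_of_mem this hmax
  have hg0 : g' 0 = 0 := by
    have := hlm.deriv_eq_zero
    rwa [(hg 0 h0).deriv] at this
  by_contra hL
  push_neg at hL
  have hslope : Tendsto (fun t => g' t / t) (nhdsWithin 0 (Ioi 0)) (nhds L) := by
    have := hasDerivAt_iff_tendsto_slope.1 hg'
    have h2 := this.mono_left (nhdsWithin_mono 0
      (by intro t ht; simp at ht ⊢; exact ne_of_gt ht : Ioi (0:ℝ) ⊆ {0}ᶜ))
    refine h2.congr' ?_
    filter_upwards [self_mem_nhdsWithin] with t ht
    simp [slope, hg0, div_eq_inv_mul]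
  have hev : ∀ᶠ t in nhdsWithin 0 (Ioi (0:ℝ)), 0 < g' t / t := by
    filter_upwards [hslope.eventually (eventually_gt_nhds (by linarith : L/2 < L))] with t ht
    linarith
  obtain ⟨ε, hε, hball⟩ := Metric.mem_nhdsWithin_iff.1 hev
  set t := min (ε/2) (δ/2) with ht
  have htpos : 0 < t := lt_min (by linarith) (by linarith)
  have htδ : t < δ := lt_of_le_of_lt (min_le_right _ _) (by linarith)
  have htε : t < ε := lt_of_le_of_lt (min_le_left _ _) (by linarith)
  have hsub : Icc (0:ℝ) t ⊆ Ioo (-δ) δ := fun s hs => ⟨by linarith [hs.1], lt_of_le_of_lt hs.2 htδ⟩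
  have hcont : ContinuousOn g (Icc 0 t) := fun s hs =>
    ((hg s (hsub hs)).continuousAt).continuousWithinAt
  obtain ⟨ξ, hξ, hξ'⟩ := exists_hasDerivAt_eq_slope g g' htpos hcont
    (fun s hs => hg s (hsub ⟨le_of_lt hs.1, le_of_lt hs.2⟩))
  have hξpos : 0 < g' ξ := by
    have hξmem : ξ ∈ Metric.ball (0:ℝ) ε ∩ Ioi 0 := by
      constructor
      · rw [Metric.mem_ball, Real.dist_eq, sub_zero, abs_of_pos hξ.1]
        linarith [hξ.2]
      · exact hξ.1
    have hq : 0 < g' ξ / ξ := hball hξmem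
    exact (div_pos_iff.1 hq).resolve_right (fun h => absurd hξ.1 (not_lt.2 (le_of_lt h.2))) |>.1
  have : g t > g 0 := by
    have h1 : (g t - g 0) / (t - 0) = g' ξ := hξ'.symm
    rw [sub_zero] at h1
    have h2 : g t - g 0 = g' ξ * t := by field_simp at h1 ⊢; linarith [h1]
    nlinarith
  exact absurd (hmax t ⟨by linarith, htδ⟩) (not_le.2 this)

lemma lapl_nonpos_of_max {v : E → ℝ} {x : E} {s : Set E} (hs : IsOpen s) (hx : x ∈ s)
    (hv : ContDiffOn ℝ 2 v s) (hmax : ∀ z ∈ s, v z ≤ v x) : lapl v x ≤ 0 := by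
  have hf1 : ContDiffOn ℝ 1 (fderiv ℝ v) s := hv.fderiv_of_isOpen hs (le_refl 2)
  obtain ⟨δ, hδ, hball⟩ := Metric.isOpen_iff.1 hs x hx
  have key : ∀ i : Fin n,
      fderiv ℝ (fderiv ℝ v) x (EuclideanSpace.single i 1) (EuclideanSpace.single i 1) ≤ 0 := by
    intro i
    set e : E := EuclideanSpace.single i 1 with he
    have hne : ‖e‖ = 1 := by simp [he]
    have hmem : ∀ t : ℝ, t ∈ Ioo (-δ) δ → x + t • e ∈ s := by
      intro t ht
      apply hball
      rw [mem_ball_iff_norm]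
      simp only [add_sub_cancel_left]
      rw [norm_smul, hne]
      simp only [mul_one]
      rw [Real.norm_eq_abs, abs_lt]
      exact ⟨ht.1, ht.2⟩
    have hgline : ∀ t ∈ Ioo (-δ) δ,
        HasDerivAt (fun t : ℝ => v (x + t • e)) (fderiv ℝ v (x + t • e) e) t := by
      intro t ht
      have hdv : HasFDerivAt v (fderiv ℝ v (x + t • e)) (x + t • e) :=
        ((hv.differentiableOn (by norm_num)).differentiableAt
          (hs.mem_nhds (hmem t ht))).hasFDerivAt
      have hline : HasDerivAt (fun t : ℝ => x + t • e) e t := by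
        simpa using ((hasDerivAt_id t).smul_const e).const_add x
      exact hdv.comp_hasDerivAt t hline
    have hgline' : HasDerivAt (fun t : ℝ => fderiv ℝ v (x + t • e) e)
        (fderiv ℝ (fderiv ℝ v) x e e) 0 := by
      have hdf : HasFDerivAt (fderiv ℝ v) (fderiv ℝ (fderiv ℝ v) x) x :=
        ((hf1.differentiableOn (by norm_num)).differentiableAt (hs.mem_nhds hx)).hasFDerivAt
      have happ : HasFDerivAt (fun z : E => fderiv ℝ v z e)
          ((ContinuousLinearMap.apply ℝ ℝ e).comp (fderiv ℝ (fderiv ℝ v) x)) x :=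
        (ContinuousLinearMap.apply ℝ ℝ e).hasFDerivAt.comp x hdf
      have hline : HasDerivAt (fun t : ℝ => x + t • e) e 0 := by
        simpa using ((hasDerivAt_id (0:ℝ)).smul_const e).const_add x
      have happ' : HasFDerivAt (fun z : E => fderiv ℝ v z e)
          ((ContinuousLinearMap.apply ℝ ℝ e).comp (fderiv ℝ (fderiv ℝ v) x)) (x + (0:ℝ) • e) := by
        simpa using happ
      have := happ'.comp_hasDerivAt 0 hline
      exact this
    refine sdt hδ hgline hgline' (fun t ht => ?_)
    have := hmax _ (hmem t ht)
    simpa using this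
  rw [lapl_eq_sum]
  exact Finset.sum_nonpos fun i _ => key i

lemma lapl_add {s : Set E} (hs : IsOpen s) {x : E} (hx : x ∈ s) {u w : E → ℝ}
    (hu : ContDiffOn ℝ 2 u s) (hw : ContDiff ℝ 2 w) (ε : ℝ) :
    lapl (fun z => u z + ε * w z) x = lapl u x + ε * lapl w x := by
  have hsx : s ∈ nhds x := hs.mem_nhds hx
  have h1 : (fun z : E => fderiv ℝ (fun z => u z + ε * w z) z)
      =ᶠ[nhds x] (fun z : E => fderiv ℝ u z + ε • fderiv ℝ w z) := by
    filter_upwards [hsx] with z hz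
    have hdu : DifferentiableAt ℝ u z :=
      (hu.differentiableOn (by norm_num)).differentiableAt (hs.mem_nhds hz)
    have hdw : DifferentiableAt ℝ w z := (hw.differentiable (by norm_num)).differentiableAt
    rw [fderiv_fun_add hdu (hdw.const_mul ε), fderiv_const_mul hdw]
  have h2 : fderiv ℝ (fderiv ℝ (fun z : E => u z + ε * w z)) x
      = fderiv ℝ (fderiv ℝ u) x + ε • fderiv ℝ (fderiv ℝ w) x := by
    rw [h1.fderiv_eq]
    have hfu : ContDiffOn ℝ 1 (fderiv ℝ u) s := hu.fderiv_of_isOpen hs (le_refl 2)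
    have hdu2 : DifferentiableAt ℝ (fderiv ℝ u) x :=
      (hfu.differentiableOn (by norm_num)).differentiableAt hsx
    have hfw : ContDiff ℝ 1 (fderiv ℝ w) := hw.fderiv_right (le_refl 2)
    have hdw2 : DifferentiableAt ℝ (fderiv ℝ w) x :=
      (hfw.differentiable (by norm_num)).differentiableAt
    rw [fderiv_fun_add (g := fun z => ε • fderiv ℝ w z) hdu2 (hdw2.const_smul ε), fderiv_fun_const_smul hdw2]
  rw [lapl_eq_sum, lapl_eq_sum, lapl_eq_sum]
  rw [Finset.mul_sum, ← Finset.sum_add_distrib]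
  refine Finset.sum_congr rfl fun i _ => ?_
  rw [h2]
  simp

end Aux

set_option maxHeartbeats 4000000 in
/-- Hopf's Lemma, with a possibly sign-changing zeroth order coefficient. -/
theorem stmt_2 (n : ℕ) (hn : 2 ≤ n)
    (Ω : Set (EuclideanSpace ℝ (Fin n))) (hΩ : IsOpen Ω)
    (c : EuclideanSpace ℝ (Fin n) → ℝ) (hc : ContinuousOn c Ω)
    (hcbdd : ∃ M : ℝ, ∀ x ∈ Ω, |c x| ≤ M)
    (u : EuclideanSpace ℝ (Fin n) → ℝ)
    (hu2 : ContDiffOn ℝ 2 u Ω) (hu1 : ContDiffOn ℝ 1 u (closure Ω))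
    (hineq : ∀ x ∈ Ω, 0 ≤ lapl u x + c x * u x)
    (hneg : ∀ x ∈ Ω, u x < 0)
    (x₀ : EuclideanSpace ℝ (Fin n)) (hx₀ : x₀ ∈ frontier Ω) (hux₀ : u x₀ = 0)
    (y : EuclideanSpace ℝ (Fin n)) (ρ : ℝ) (hρ : 0 < ρ)
    (hy : y ∈ Ω) (hball : ball y ρ ⊆ Ω) (htouch : x₀ ∈ sphere y ρ) :
    0 < fderivWithin ℝ u (closure Ω) x₀ (ρ⁻¹ • (x₀ - y)) := by
  classical
  obtain ⟨M₀, hM₀⟩ := hcbdd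
  set M : ℝ := max M₀ 0 with hM
  have hMnonneg : 0 ≤ M := le_max_right _ _
  have hMb : ∀ x ∈ Ω, |c x| ≤ M := fun x hx => le_trans (hM₀ x hx) (le_max_left _ _)
  set α : ℝ := (2*n + M + 1)/ρ^2 + 1 with hα
  have hα1 : 1 ≤ α := by
    have h : 0 ≤ (2*n + M + 1)/ρ^2 := by positivity
    simp only [hα]; linarith
  have hα0 : 0 < α := by linarith
  have hαρ : 2*n + M + 1 ≤ α * ρ^2 := by
    rw [hα, add_mul, div_mul_cancel₀ _ (by positivity : (ρ:ℝ)^2 ≠ 0)]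
    nlinarith [sq_nonneg ρ]
  have hkey : ∀ r : ℝ, ρ/2 ≤ r → 1 ≤ 4*α^2*r^2 - 2*α*↑n - M := by
    intro r hr
    have hr0 : 0 ≤ r := by linarith
    have hsq : ρ^2 ≤ (2*r)^2 := by nlinarith
    have h1 : α^2*ρ^2 ≤ 4*α^2*r^2 := by nlinarith [mul_le_mul_of_nonneg_left hsq (sq_nonneg α)]
    have h2 : α*(2*↑n+M+1) ≤ α^2*ρ^2 := by nlinarith
    have h3 : 2*α*↑n + M + 1 ≤ α*(2*↑n+M+1) := by nlinarith [Nat.cast_nonneg (α := ℝ) n]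
    linarith
  have hx₀cl : x₀ ∈ closure Ω := frontier_subset_closure hx₀
  have hx₀y : ‖x₀ - y‖ = ρ := by rwa [mem_sphere, dist_eq_norm] at htouch
  have hclball : closedBall y ρ ⊆ closure Ω := by
    rw [← closure_ball y (ne_of_gt hρ)]; exact closure_mono hball
  have hu_le : ∀ z ∈ closure Ω, u z ≤ 0 := by
    intro z hz
    have hne : (nhdsWithin z Ω).NeBot := mem_closure_iff_nhdsWithin_neBot.1 hz
    have ht : Filter.Tendsto u (nhdsWithin z Ω) (nhds (u z)) :=
      ((hu1.continuousOn) z hz).mono_left (nhdsWithin_mono z subset_closure)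
    exact le_of_tendsto ht
      (Filter.eventually_of_mem self_mem_nhdsWithin (fun w hw => (hneg w hw).le))
  haveI : Nonempty (Fin n) := ⟨⟨0, by omega⟩⟩
  have hSne : (sphere y (ρ/2)).Nonempty := NormedSpace.sphere_nonempty.2 (by linarith)
  have hSΩ : sphere y (ρ/2) ⊆ Ω := fun z hz => hball (by
    rw [mem_sphere] at hz; rw [mem_ball, hz]; linarith)
  obtain ⟨zm, hzmS, hzmax⟩ := (isCompact_sphere y (ρ/2)).exists_isMaxOn hSne
    ((hu1.continuousOn).mono (hSΩ.trans subset_closure))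
  set ε : ℝ := -u zm with hε
  have hεpos : 0 < ε := by
    simp only [hε]; linarith [hneg zm (hSΩ hzmS)]
  have hSbound : ∀ z ∈ sphere y (ρ/2), u z ≤ -ε := by
    intro z hz
    have h1 : u z ≤ u zm := hzmax hz
    simp only [hε, neg_neg]
    exact h1
  set C : ℝ := Real.exp (-α*ρ^2) with hC
  have hCpos : 0 < C := Real.exp_pos _
  set w : EuclideanSpace ℝ (Fin n) → ℝ := fun z => Real.exp (-α*‖z-y‖^2) - C with hwdef
  have hw2 : ContDiff ℝ 2 w := by
    have h1 : ContDiff ℝ 2 (fun z : EuclideanSpace ℝ (Fin n) => ‖z - y‖^2) :=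
      ContDiff.norm_sq ℝ (contDiff_id.sub contDiff_const)
    exact (Real.contDiff_exp.comp (contDiff_const.mul h1)).sub contDiff_const
  set v : EuclideanSpace ℝ (Fin n) → ℝ := fun z => u z + ε * w z with hvdef
  set A : Set (EuclideanSpace ℝ (Fin n)) := closedBall y ρ \ ball y (ρ/2) with hA
  have hAcomp : IsCompact A := (isCompact_closedBall y ρ).diff isOpen_ball
  have hAsub : A ⊆ closure Ω := fun z hz => hclball hz.1
  have hx₀A : x₀ ∈ A := by
    constructor
    · rw [mem_closedBall]; rw [mem_sphere] at htouch; exact le_of_eq htouch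
    · rw [mem_ball] at *; rw [mem_sphere] at htouch; intro hcon; rw [htouch] at hcon; linarith
  have hwx₀ : w x₀ = 0 := by simp only [hwdef, hx₀y, hC]; exact sub_self _
  have hvcont : ContinuousOn v A :=
    ((hu1.continuousOn).mono hAsub).add
      ((continuous_const.mul (hw2.continuous)).continuousOn)
  have hvA : ∀ z ∈ A, v z ≤ 0 := by
    by_contra hcon
    push_neg at hcon
    obtain ⟨z₁, hz₁A, hz₁pos⟩ := hcon
    obtain ⟨z₀, hz₀A, hz₀max⟩ := hAcomp.exists_isMaxOn ⟨x₀, hx₀A⟩ hvcont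
    have hv₀pos : 0 < v z₀ := lt_of_lt_of_le hz₁pos (hz₀max hz₁A)
    have hd1 : ρ/2 ≤ dist z₀ y := not_lt.1 (fun hcc => hz₀A.2 (mem_ball.2 hcc))
    have hd2 : dist z₀ y ≤ ρ := mem_closedBall.1 hz₀A.1
    rcases eq_or_lt_of_le hd2 with hb | hlt
    · -- outer sphere
      have hwz : w z₀ = 0 := by
        simp only [hwdef, hC]
        rw [← dist_eq_norm, hb]
        exact sub_self _
      have hveq : v z₀ = u z₀ := by simp only [hvdef, hwz]; ring
      rw [hveq] at hv₀pos
      exact absurd (hu_le z₀ (hAsub hz₀A)) (not_le.2 hv₀pos)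
    · rcases eq_or_lt_of_le hd1 with hb2 | hgt
      · -- inner sphere
        have hz₀S : z₀ ∈ sphere y (ρ/2) := by rw [mem_sphere]; exact hb2.symm
        have hu₀ : u z₀ ≤ -ε := hSbound z₀ hz₀S
        have hwle : w z₀ ≤ 1 := by
          simp only [hwdef]
          have : Real.exp (-α*‖z₀-y‖^2) ≤ 1 := by
            rw [Real.exp_le_one_iff]
            nlinarith [sq_nonneg ‖z₀-y‖]
          linarith
        have : v z₀ ≤ -ε + ε * 1 := by
          simp only [hvdef]
          have := mul_le_mul_of_nonneg_left hwle hεpos.le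
          linarith
        linarith
      · -- interior point
        set O : Set (EuclideanSpace ℝ (Fin n)) := ball y ρ \ closedBall y (ρ/2) with hO
        have hOopen : IsOpen O := isOpen_ball.sdiff isClosed_closedBall
        have hz₀O : z₀ ∈ O := ⟨mem_ball.2 hlt, fun hcc => absurd (mem_closedBall.1 hcc) (not_le.2 hgt)⟩
        have hOΩ : O ⊆ Ω := fun z hz => hball hz.1
        have hOA : O ⊆ A := fun z hz =>
          ⟨ball_subset_closedBall hz.1, fun hcc => hz.2 (ball_subset_closedBall hcc)⟩
        have hvC2 : ContDiffOn ℝ 2 v O :=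
          (hu2.mono hOΩ).add (contDiffOn_const.mul hw2.contDiffOn)
        have hlap : lapl v z₀ ≤ 0 :=
          lapl_nonpos_of_max hOopen hz₀O hvC2 (fun z hz => hz₀max (hOA hz))
        have hsplit : lapl v z₀ = lapl u z₀ + ε * lapl w z₀ :=
          lapl_add hOopen hz₀O (hu2.mono hOΩ) hw2 ε
        have hlw : lapl w z₀ = Real.exp (-α*‖z₀-y‖^2) * (4*α^2*‖z₀-y‖^2 - 2*α*↑n) :=
          lapl_barrier α y z₀ C
        set r : ℝ := ‖z₀ - y‖ with hr
        have hrd : dist z₀ y = r := dist_eq_norm z₀ y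
        have hr1 : ρ/2 ≤ r := by rw [← hrd]; exact hd1
        have hr2 : r ≤ ρ := by rw [← hrd]; exact hd2
        set ee : ℝ := Real.exp (-α*r^2) with hee
        have heepos : 0 < ee := Real.exp_pos _
        have hbound : 1 ≤ 4*α^2*r^2 - 2*α*↑n - M := hkey r hr1
        have hwz : w z₀ = ee - C := rfl
        have hCee : C ≤ ee := by
          simp only [hC, hee]
          apply Real.exp_le_exp.2
          have hr0 : (0:ℝ) ≤ r := by linarith
          nlinarith [mul_le_mul_of_nonneg_left (by nlinarith : r^2 ≤ ρ^2) hα0.le]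
        have hw0 : 0 ≤ w z₀ := by rw [hwz]; linarith
        have hwee : w z₀ ≤ ee := by rw [hwz]; linarith
        have hz₀Ω : z₀ ∈ Ω := hOΩ hz₀O
        have hu_ineq : 0 ≤ lapl u z₀ + c z₀ * u z₀ := hineq z₀ hz₀Ω
        have hcz : |c z₀| ≤ M := hMb z₀ hz₀Ω
        have hun : u z₀ < 0 := hneg z₀ hz₀Ω
        set ct : ℝ := min (c z₀) 0 with hct
        have hct0 : ct ≤ 0 := min_le_right _ _
        have hctM : -M ≤ ct := by
          rcases abs_le.1 hcz with ⟨h1, _⟩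
          exact le_min h1 (by linarith)
        have hctc : ct ≤ c z₀ := min_le_left _ _
        have hA1 : 0 ≤ lapl u z₀ + ct * u z₀ := by nlinarith
        have hA2 : ct * v z₀ ≤ 0 := mul_nonpos_of_nonpos_of_nonneg hct0 hv₀pos.le
        have hA3 : ee ≤ lapl w z₀ - M * w z₀ := by
          rw [hlw]
          have h1 : M * w z₀ ≤ M * ee := mul_le_mul_of_nonneg_left hwee hMnonneg
          have h2 : ee * 1 ≤ ee * (4*α^2*r^2 - 2*α*↑n - M) :=
            mul_le_mul_of_nonneg_left hbound heepos.le
          nlinarith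
        have hA4 : -M * w z₀ ≤ ct * w z₀ := mul_le_mul_of_nonneg_right hctM hw0
        have h5 : 0 < lapl w z₀ + ct * w z₀ := by nlinarith
        have h6 : 0 < ε * lapl w z₀ + ε * (ct * w z₀) := by nlinarith
        have hexp : ct * v z₀ = ct * u z₀ + ε * (ct * w z₀) := by
          simp only [hvdef]; ring
        linarith [hlap, hA2, hsplit, hexp, hA1, h6]
  -- final derivative extraction
  set ν : EuclideanSpace ℝ (Fin n) := ρ⁻¹ • (x₀ - y) with hν
  have hinner : (inner ℝ (x₀ - y) ν : ℝ) = ρ := by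
    rw [hν, real_inner_smul_right, real_inner_self_eq_norm_sq, hx₀y, sq]
    rw [← mul_assoc, inv_mul_cancel₀ (ne_of_gt hρ), one_mul]
  have hx₀cl' : x₀ ∈ closure Ω := hx₀cl
  have hudiff : HasFDerivWithinAt u (fderivWithin ℝ u (closure Ω) x₀) (closure Ω) x₀ :=
    ((hu1.differentiableOn one_ne_zero) x₀ hx₀cl).hasFDerivWithinAt
  set f := fderivWithin ℝ u (closure Ω) x₀ with hf
  set ℓ : ℝ → EuclideanSpace ℝ (Fin n) := fun t => x₀ - t • ν with hℓ
  have hℓ0 : ℓ 0 = x₀ := by simp [hℓ]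
  have hℓy : ∀ t : ℝ, ℓ t - y = (1 - t * ρ⁻¹) • (x₀ - y) := by
    intro t
    simp only [hℓ, hν, smul_smul, sub_smul, one_smul]
    abel
  have hℓnorm : ∀ t ∈ Icc (0:ℝ) (ρ/2), ‖ℓ t - y‖ = ρ - t := by
    intro t ht
    have hρ' : ρ ≠ 0 := ne_of_gt hρ
    rw [hℓy, norm_smul, hx₀y, Real.norm_eq_abs, abs_of_nonneg]
    · rw [sub_mul, one_mul, mul_assoc, inv_mul_cancel₀ hρ', mul_one]
    · rw [sub_nonneg, ← div_eq_mul_inv, div_le_one hρ]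
      linarith [ht.2]
  have hmapsA : ∀ t ∈ Icc (0:ℝ) (ρ/2), ℓ t ∈ A := by
    intro t ht
    constructor
    · rw [mem_closedBall, dist_eq_norm, hℓnorm t ht]
      linarith [ht.1]
    · rw [mem_ball, dist_eq_norm, hℓnorm t ht]
      intro hcon
      linarith [ht.2]
  have hmapscl : MapsTo ℓ (Icc 0 (ρ/2)) (closure Ω) := fun t ht => hAsub (hmapsA t ht)
  have hℓderiv : HasDerivWithinAt ℓ (-ν) (Icc 0 (ρ/2)) 0 := by
    have h := (((hasDerivAt_id (0:ℝ)).smul_const ν).const_sub x₀).hasDerivWithinAt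
      (s := Icc 0 (ρ/2))
    simpa [hℓ] using h
  have hφu : HasDerivWithinAt (fun t => u (ℓ t)) (f (-ν)) (Icc 0 (ρ/2)) 0 := by
    have hud' : HasFDerivWithinAt u f (closure Ω) (ℓ 0) := by rw [hℓ0]; exact hudiff
    exact hud'.comp_hasDerivWithinAt 0 hℓderiv hmapscl
  have hφw : HasDerivWithinAt (fun t => w (ℓ t)) (2*α*ρ*C) (Icc 0 (ρ/2)) 0 := by
    have hgw : HasFDerivAt w (gaussD α y x₀) x₀ := (hasFDerivAt_gauss α y x₀).sub_const C
    have hgw' : HasFDerivWithinAt w (gaussD α y x₀) (closure Ω) (ℓ 0) := by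
      rw [hℓ0]; exact hgw.hasFDerivWithinAt
    have h := hgw'.comp_hasDerivWithinAt 0 hℓderiv hmapscl
    have hval : gaussD α y x₀ (-ν) = 2*α*ρ*C := by
      rw [gaussD_apply, inner_neg_right, hinner, hx₀y, hC]
      ring
    rwa [hval] at h
  have hφ : HasDerivWithinAt (fun t => v (ℓ t)) (f (-ν) + ε * (2*α*ρ*C))
      (Icc 0 (ρ/2)) 0 := by
    have := hφu.add (hφw.const_mul ε)
    exact this
  have hval0 : v (ℓ 0) = 0 := by
    rw [hℓ0]
    show u x₀ + ε * w x₀ = 0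
    rw [hux₀, hwx₀]
    ring
  have hρ2 : (0:ℝ) < ρ/2 := by linarith
  have hDle : f (-ν) + ε * (2*α*ρ*C) ≤ 0 := by
    have hslope := hasDerivWithinAt_iff_tendsto_slope.1 hφ
    have hIcc : Icc (0:ℝ) (ρ/2) \ {0} = Ioc 0 (ρ/2) := by
      ext t
      simp only [mem_diff, mem_Icc, mem_Ioc, mem_singleton_iff]
      constructor
      · rintro ⟨⟨h1, h2⟩, h3⟩
        exact ⟨lt_of_le_of_ne h1 (Ne.symm h3), h2⟩
      · rintro ⟨h1, h2⟩
        exact ⟨⟨h1.le, h2⟩, ne_of_gt h1⟩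
    rw [hIcc, nhdsWithin_Ioc_eq_nhdsGT hρ2] at hslope
    refine le_of_tendsto hslope ?_
    filter_upwards [Ioc_mem_nhdsGT_of_mem (⟨le_rfl, hρ2⟩ :
      (0:ℝ) ∈ Ico (0:ℝ) (ρ/2))] with t ht
    have htA := hmapsA t ⟨ht.1.le, ht.2⟩
    have hvle : v (ℓ t) ≤ 0 := hvA _ htA
    rw [slope_def_field]
    have : (v (ℓ t) - v (ℓ 0)) / (t - 0) ≤ 0 := by
      rw [hval0, sub_zero, sub_zero]
      exact div_nonpos_of_nonpos_of_nonneg hvle ht.1.le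
    simpa [div_eq_inv_mul] using this
  have hprod : 0 < ε * (2*α*ρ*C) := by
    apply mul_pos hεpos
    apply mul_pos (mul_pos (by linarith) hρ) hCpos
  have hmapneg : f (-ν) = -(f ν) := by rw [map_neg]
  rw [hmapneg] at hDle
  have : 0 < f ν := by linarith
  exact this
end

section
/- Let n ≥ 2, R > 1 and Ω = B_R \ closure(B_1) ⊂ ℝⁿ. Let f : ℝ → ℝ be a C¹ function with f(s) ≤ 0 for all s, and let u ∈ C²(closure(Ω)) satisfy Δu = f(u) in Ω, u = 1 on |x| = 1, and u = 0 on |x| = R. If x₀ ∈ ∂B_R has first coordinate (x₀)₁ > 0, then there exists δ > 0 such that ∂u/∂x₁(x) < 0 for all x ∈ Ω with |x − x₀| < δ. -/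
open Metric Set

open Filter Finset

/-- 1D second derivative test: at a local min, second derivative nonneg. -/
lemma ml {g : ℝ → ℝ} {m : ℝ} (hmin : IsLocalMin g 0)
    (hd : ∀ᶠ t in nhds (0:ℝ), DifferentiableAt ℝ g t)
    (hd2 : HasDerivAt (deriv g) m 0) : 0 ≤ m := by
  by_contra hm
  push_neg at hm
  have d0 : deriv g 0 = 0 := hmin.deriv_eq_zero
  have hslope : Tendsto (slope (deriv g) 0) (nhdsWithin 0 {(0:ℝ)}ᶜ) (nhds m) :=
    hasDerivAt_iff_tendsto_slope.mp hd2
  have hev : ∀ᶠ t in nhdsWithin (0:ℝ) {(0:ℝ)}ᶜ, slope (deriv g) 0 t < 0 :=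
    hslope.eventually_lt_const hm
  rw [eventually_nhdsWithin_iff] at hev
  have hall : ∀ᶠ t in nhds (0:ℝ), (t ∈ ({(0:ℝ)}ᶜ) → slope (deriv g) 0 t < 0)
      ∧ DifferentiableAt ℝ g t ∧ g 0 ≤ g t := hev.and (hd.and hmin)
  rw [Metric.eventually_nhds_iff] at hall
  obtain ⟨ε, hε, hball⟩ := hall
  -- on (-ε, 0), deriv g is positive
  have hpos : ∀ t, -ε < t → t < 0 → 0 < deriv g t := by
    intro t ht1 ht2
    have hd : dist t 0 < ε := by
      rw [Real.dist_eq]; rw [abs_sub_lt_iff]; constructor <;> linarith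
    have := (hball hd).1 (by simp [ht2.ne])
    rw [slope_def_field, d0] at this
    have : (deriv g t) / t < 0 := by simpa using this
    rcases lt_trichotomy (deriv g t) 0 with h | h | h
    · exfalso; nlinarith [div_pos_iff.mpr (Or.inr ⟨h, ht2⟩)]
    · simp [h] at this
    · exact h
  set a : ℝ := -(ε/2) with ha
  have hmono : StrictMonoOn g (Icc a 0) := by
    apply strictMonoOn_of_deriv_pos (convex_Icc a 0)
    · apply ContinuousOn.mono (s := Metric.ball (0:ℝ) ε)
      · exact fun x hx => ((hball (by simpa [Real.dist_eq] using hx)).2.1).continuousAt.continuousWithinAt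
      · intro x hx
        simp only [Metric.mem_ball, Real.dist_eq]
        rcases hx with ⟨h1, h2⟩
        have h1' : -(ε/2) ≤ x := h1
        rw [abs_sub_lt_iff]
        constructor <;> linarith
    · intro x hx
      rw [interior_Icc] at hx
      have h1' : -(ε/2) < x := hx.1
      exact hpos x (by linarith) hx.2
  have ha0 : a < 0 := by rw [ha]; linarith
  have h1 : g a < g 0 := hmono ⟨le_refl a, ha0.le⟩ ⟨ha0.le, le_refl 0⟩ ha0
  have h2 : g 0 ≤ g a := by
    refine (hball ?_).2.2
    rw [Real.dist_eq, sub_zero, ha, abs_of_nonpos (by linarith)]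
    linarith
  linarith

variable {E : Type*} [NormedAddCommGroup E] [NormedSpace ℝ E]

/-- derivative of F along the line t ↦ z + t e, eventually near 0 -/
lemma line_deriv {F : E → ℝ} {z : E} (e : E) (hF : ContDiffAt ℝ 2 F z) :
    ∀ᶠ t in nhds (0:ℝ), HasDerivAt (fun s : ℝ => F (z + s • e))
      (fderiv ℝ F (z + t • e) e) t := by
  have hev : ∀ᶠ y in nhds z, DifferentiableAt ℝ F y := by
    filter_upwards [hF.eventually (by norm_num)] with y hy
    exact hy.differentiableAt (by norm_num)
  have hline : Continuous (fun t : ℝ => z + t • e) := by continuity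
  have : ∀ᶠ t in nhds (0:ℝ), DifferentiableAt ℝ F (z + t • e) := by
    have h0 : z + (0:ℝ) • e = z := by simp
    have ht : Filter.Tendsto (fun t : ℝ => z + t • e) (nhds 0) (nhds z) := by
      have := hline.tendsto 0
      rwa [h0] at this
    exact ht.eventually hev
  filter_upwards [this] with t ht
  have hl : HasDerivAt (fun s : ℝ => z + s • e) e t := by
    simpa using ((hasDerivAt_id t).smul_const e).const_add z
  exact ht.hasFDerivAt.comp_hasDerivAt t hl

lemma second_deriv_line {F : E → ℝ} {z : E} (e : E) (hF : ContDiffAt ℝ 2 F z) :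
    HasDerivAt (deriv (fun s : ℝ => F (z + s • e)))
      (fderiv ℝ (fderiv ℝ F) z e e) 0 := by
  have hev := line_deriv e hF
  have hde : deriv (fun s : ℝ => F (z + s • e)) =ᶠ[nhds (0:ℝ)]
      fun t => fderiv ℝ F (z + t • e) e := by
    filter_upwards [hev] with t ht using ht.deriv
  have hF2 : DifferentiableAt ℝ (fderiv ℝ F) z := by
    have := hF.fderiv_right (m := 1) (by norm_num)
    exact this.differentiableAt (by norm_num)
  have hl : HasDerivAt (fun s : ℝ => z + s • e) e 0 := by
    simpa using ((hasDerivAt_id (0:ℝ)).smul_const e).const_add z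
  have hc : HasDerivAt (fun t : ℝ => fderiv ℝ F (z + t • e)) (fderiv ℝ (fderiv ℝ F) z e) 0 := by
    have h0 : z + (0:ℝ) • e = z := by simp
    have hF2' : HasFDerivAt (fderiv ℝ F) (fderiv ℝ (fderiv ℝ F) z) (z + (0:ℝ) • e) := by
      rw [h0]; exact hF2.hasFDerivAt
    exact hF2'.comp_hasDerivAt 0 hl
  have happ : HasDerivAt (fun t : ℝ => fderiv ℝ F (z + t • e) e)
      (fderiv ℝ (fderiv ℝ F) z e e) 0 := by
    have := hc.clm_apply (hasDerivAt_const 0 e)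
    simpa using this
  exact happ.congr_of_eventuallyEq hde

lemma iteratedFDeriv_line {F : E → ℝ} {z : E} (e : E) (hF : ContDiffAt ℝ 2 F z) :
    iteratedFDeriv ℝ 2 F z ![e, e] = deriv (deriv (fun s : ℝ => F (z + s • e))) 0 := by
  rw [iteratedFDeriv_two_apply]
  exact ((second_deriv_line e hF).deriv).symm

variable {E : Type*} [NormedAddCommGroup E] [NormedSpace ℝ E]

section geom
variable {R : ℝ} (hR : 1 < R)

lemma omega_mem {z : E} : z ∈ (ball (0:E) R \ closure (ball 0 1)) ↔ 1 < ‖z‖ ∧ ‖z‖ < R := by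
  rw [closure_ball (0:E) one_ne_zero]
  simp only [mem_diff, mem_ball_zero_iff, mem_closedBall_zero_iff, not_le]
  tauto

lemma closure_omega_subset {z : E} (hz : z ∈ closure (ball (0:E) R \ closure (ball 0 1))) :
    1 ≤ ‖z‖ ∧ ‖z‖ ≤ R := by
  constructor
  · have : closure (ball (0:E) R \ closure (ball 0 1)) ⊆ (ball (0:E) 1)ᶜ := by
      apply closure_minimal _ (isOpen_ball.isClosed_compl)
      intro y hy
      simp only [mem_compl_iff, mem_ball_zero_iff, not_lt]
      exact le_of_lt ((omega_mem.mp hy).1)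
    have := this hz
    simpa [mem_ball_zero_iff, not_lt] using this
  · have : closure (ball (0:E) R \ closure (ball 0 1)) ⊆ closedBall (0:E) R := by
      apply closure_minimal _ isClosed_closedBall
      exact fun y hy => ball_subset_closedBall hy.1
    simpa [mem_closedBall_zero_iff] using this hz

include hR in
lemma sphere_subset_closure {z : E} (hz : ‖z‖ = R) :
    z ∈ closure (ball (0:E) R \ closure (ball 0 1)) := by
  have hRpos : (0:ℝ) < R := by linarith
  have htend : Filter.Tendsto (fun t : ℝ => t • z) (nhdsWithin (1:ℝ) (Iio 1)) (nhds z) := by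
    have hc : Filter.Tendsto (fun t : ℝ => t • z) (nhds 1) (nhds ((1:ℝ) • z)) :=
      ((continuous_id.smul continuous_const).tendsto 1)
    rw [one_smul] at hc
    exact hc.mono_left nhdsWithin_le_nhds
  apply mem_closure_of_tendsto htend
  · filter_upwards [Ioo_mem_nhdsLT_of_mem (show (1/R) < 1 ∧ (1:ℝ) ≤ 1 from ⟨by
      rw [div_lt_one hRpos]; exact hR, le_rfl⟩ : 1 ∈ Ioc (1/R) 1)] with t ht
    rcases ht with ⟨h1, h2⟩
    rw [omega_mem]
    have ht0 : 0 < t := lt_trans (by positivity) h1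
    rw [norm_smul, Real.norm_eq_abs, abs_of_pos ht0, hz]
    constructor
    · calc 1 = (1/R) * R := by field_simp
        _ < t * R := by apply mul_lt_mul_of_pos_right h1 hRpos
    · nlinarith
end geom

section geom2
variable {R : ℝ} (hR : 1 < R)

include hR in
lemma uniqueDiffOn_closure_omega :
    UniqueDiffOn ℝ (closure (ball (0:E) R \ closure (ball 0 1))) := by
  set Ω : Set E := ball (0:E) R \ closure (ball 0 1) with hΩ
  have hΩopen : IsOpen Ω := isOpen_ball.sdiff isClosed_closure
  intro z hz
  obtain ⟨h1, h2⟩ := closure_omega_subset hz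
  set r : ℝ := (R - 1)/2 with hr
  have hrpos : 0 < r := by rw [hr]; linarith
  rcases eq_or_lt_of_le h1 with he1 | h1'
  · -- ‖z‖ = 1 : use external tangent ball of radius r centered (1+r)•z
    have hz1 : ‖z‖ = 1 := he1.symm
    have hzsub : ball ((1+r) • z) r ⊆ Ω := by
      intro y hy
      rw [mem_ball] at hy
      rw [omega_mem]
      have hd : ‖y - (1+r) • z‖ < r := by rwa [← dist_eq_norm]
      have hcn : ‖(1+r) • z‖ = 1 + r := by
        rw [norm_smul, Real.norm_eq_abs, abs_of_pos (by linarith), hz1, mul_one]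
      constructor
      · have := norm_sub_norm_le ((1+r) • z) y
        rw [norm_sub_rev] at hd
        have : (1+r) - ‖y‖ < r := by
          calc (1+r) - ‖y‖ = ‖(1+r) • z‖ - ‖y‖ := by rw [hcn]
            _ ≤ ‖(1+r) • z - y‖ := norm_sub_norm_le _ _
            _ < r := hd
        linarith
      · have : ‖y‖ < (1+r) + r := by
          calc ‖y‖ ≤ ‖(1+r) • z‖ + ‖y - (1+r) • z‖ := by
                have := norm_add_le ((1+r) • z) (y - (1+r) • z); simpa using this
            _ < (1+r) + r := by rw [hcn]; linarith
        have : 1 + 2*r < R ∨ 1 + 2*r = R := by right; rw [hr]; ring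
        rcases this with h | h
        · linarith
        · linarith
    have hzcl : z ∈ closure (ball ((1+r) • z) r) := by
      rw [closure_ball _ (ne_of_gt hrpos), mem_closedBall, dist_eq_norm]
      have : z - (1+r) • z = (-r) • z := by module
      rw [this, norm_smul, Real.norm_eq_abs, abs_neg, abs_of_pos hrpos, hz1, mul_one]
    exact (uniqueDiffWithinAt_convex (convex_ball _ _)
      (by rw [isOpen_ball.interior_eq]; exact nonempty_ball.mpr hrpos) hzcl).mono
      (hzsub.trans subset_closure)
  rcases eq_or_lt_of_le h2 with h2' | h2'
  · -- ‖z‖ = R : internal tangent ball centered (1 - r/R)•z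
    have hRpos : (0:ℝ) < R := by linarith
    have hzsub : ball ((1-r/R) • z) r ⊆ Ω := by
      intro y hy
      rw [mem_ball] at hy
      have hd : ‖y - (1-r/R) • z‖ < r := by rwa [← dist_eq_norm]
      have hcn : ‖(1-r/R) • z‖ = R - r := by
        rw [norm_smul, Real.norm_eq_abs, abs_of_pos, ← h2']
        · field_simp
        · rw [sub_pos, div_lt_one hRpos]; rw [hr]; linarith
      rw [omega_mem]
      constructor
      · have : (R - r) - ‖y‖ < r := by
          rw [norm_sub_rev] at hd
          calc (R - r) - ‖y‖ = ‖(1-r/R) • z‖ - ‖y‖ := by rw [hcn]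
            _ ≤ ‖(1-r/R) • z - y‖ := norm_sub_norm_le _ _
            _ < r := hd
        have hle : R - 2*r ≤ 1 := by rw [hr]; linarith
        linarith
      · calc ‖y‖ ≤ ‖(1-r/R) • z‖ + ‖y - (1-r/R) • z‖ := by
              have := norm_add_le ((1-r/R) • z) (y - (1-r/R) • z); simpa using this
          _ < (R - r) + r := by rw [hcn]; linarith
          _ = R := by ring
    have hzcl : z ∈ closure (ball ((1-r/R) • z) r) := by
      rw [closure_ball _ (ne_of_gt hrpos), mem_closedBall, dist_eq_norm]
      have : z - (1-r/R) • z = (r/R) • z := by module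
      rw [this, norm_smul, Real.norm_eq_abs, abs_of_pos (by positivity), ← h2']
      rw [← h2'] at hRpos
      field_simp
      norm_num
    exact (uniqueDiffWithinAt_convex (convex_ball _ _)
      (by rw [isOpen_ball.interior_eq]; exact nonempty_ball.mpr hrpos) hzcl).mono
      (hzsub.trans subset_closure)
  · -- interior point
    have : z ∈ Ω := omega_mem.mpr ⟨h1', h2'⟩
    exact uniqueDiffWithinAt_of_mem_nhds (Filter.mem_of_superset (hΩopen.mem_nhds this) subset_closure)
end geom2

noncomputable def qfun {n : ℕ} (x : EuclideanSpace ℝ (Fin n)) : ℝ := ∑ i, (x i)^2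

lemma qfun_eq_norm {n : ℕ} (x : EuclideanSpace ℝ (Fin n)) : qfun x = ‖x‖^2 := by
  rw [EuclideanSpace.norm_eq, Real.sq_sqrt (by positivity)]
  simp [qfun, sq_abs]

lemma qfun_cont {n : ℕ} : Continuous (fun x : EuclideanSpace ℝ (Fin n) => qfun x) := by
  simp only [qfun_eq_norm]
  continuity

lemma qfun_line {n : ℕ} (z : EuclideanSpace ℝ (Fin n)) (i : Fin n) (t : ℝ) :
    qfun (z + t • EuclideanSpace.single i 1) = qfun z + 2 * z i * t + t^2 := by
  unfold qfun
  have h : ∀ j, (z + t • EuclideanSpace.single i 1 : EuclideanSpace ℝ (Fin n)) j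
      = z j + t * (if j = i then 1 else 0) := by
    intro j
    rw [PiLp.add_apply, PiLp.smul_apply, EuclideanSpace.single_apply]
    rcases eq_or_ne j i with h | h <;> simp [h]
  simp only [h]
  have expand : ∀ j : Fin n, (z j + t * (if j = i then 1 else 0))^2
      = (z j)^2 + 2 * (z j * (if j = i then 1 else 0)) * t + t^2 * (if j = i then 1 else 0) := by
    intro j
    by_cases hj : j = i <;> simp [hj] <;> ring
  simp only [expand]
  rw [Finset.sum_add_distrib, Finset.sum_add_distrib]
  congr 1
  · congr 1
    rw [← Finset.sum_mul, ← Finset.mul_sum]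
    congr 2
    simp [Finset.sum_ite_eq]
  · rw [← Finset.mul_sum]
    simp [Finset.sum_ite_eq]

lemma poly_hasDeriv (c0 c1 : ℝ) (t : ℝ) :
    HasDerivAt (fun t : ℝ => c0 + c1 * t + t^2) (c1 + 2*t) t := by
  have h1 : HasDerivAt (fun t : ℝ => c0 + c1 * t) c1 t := by
    simpa using ((hasDerivAt_id t).const_mul c1).const_add c0
  have h2 : HasDerivAt (fun t : ℝ => t^2) (2*t) t := by
    simpa using hasDerivAt_pow 2 t
  exact h1.add h2

lemma poly_deriv2 (c0 c1 : ℝ) :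
    HasDerivAt (fun t : ℝ => c1 + 2*t) 2 0 := by
  simpa using ((hasDerivAt_id (0:ℝ)).const_mul 2).const_add c1

/-- explicit derivative of t ↦ exp(-α(c0+c1t+t²)) - K -/
lemma expline_hasDeriv (α c0 c1 K : ℝ) (t : ℝ) :
    HasDerivAt (fun t : ℝ => Real.exp (-α * (c0 + c1 * t + t^2)) - K)
      (Real.exp (-α * (c0 + c1 * t + t^2)) * (-α * (c1 + 2*t))) t := by
  have h1 : HasDerivAt (fun t : ℝ => -α * (c0 + c1 * t + t^2)) (-α * (c1 + 2*t)) t :=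
    (poly_hasDeriv c0 c1 t).const_mul (-α)
  exact (h1.exp).sub_const K

/-- second derivative of the exp line function at 0 -/
lemma expline_deriv2 (α c0 c1 : ℝ) :
    HasDerivAt (fun t : ℝ => Real.exp (-α * (c0 + c1 * t + t^2)) * (-α * (c1 + 2*t)))
      (Real.exp (-α * c0) * (α^2 * c1^2 - 2*α)) 0 := by
  have h1 : HasDerivAt (fun t : ℝ => Real.exp (-α * (c0 + c1 * t + t^2)))
      (Real.exp (-α * (c0 + c1 * 0 + 0^2)) * (-α * (c1 + 2*0))) 0 :=
    ((poly_hasDeriv c0 c1 0).const_mul (-α)).exp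
  have h2 : HasDerivAt (fun t : ℝ => -α * (c1 + 2*t)) (-α * 2) 0 :=
    (poly_deriv2 c0 c1).const_mul (-α)
  have := h1.mul h2
  refine this.congr_deriv ?_
  simp
  ring

section minprinciple
variable {n : ℕ}

lemma min_principle (hn : 2 ≤ n) {R : ℝ} (hR : 1 < R)
    {f : ℝ → ℝ} (hfnonpos : ∀ s, f s ≤ 0)
    {u : EuclideanSpace ℝ (Fin n) → ℝ}
    (hu : ContDiffOn ℝ 2 u (closure (ball (0:EuclideanSpace ℝ (Fin n)) R \ closure (ball 0 1))))
    (hpde : ∀ x ∈ (ball (0:EuclideanSpace ℝ (Fin n)) R \ closure (ball 0 1)), lapl u x = f (u x))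
    (hb1 : ∀ x : EuclideanSpace ℝ (Fin n), ‖x‖ = 1 → u x = 1)
    (hbR : ∀ x : EuclideanSpace ℝ (Fin n), ‖x‖ = R → u x = 0) :
    ∀ x ∈ closure (ball (0:EuclideanSpace ℝ (Fin n)) R \ closure (ball 0 1)),
      Real.exp (-(n:ℝ) * qfun x) - Real.exp (-(n:ℝ) * R^2) ≤ u x := by
  have hn0 : 0 < n := by omega
  have hnpos : (0:ℝ) < (n:ℝ) := by exact_mod_cast hn0
  set α : ℝ := (n:ℝ) with hα
  set Ω : Set (EuclideanSpace ℝ (Fin n)) := ball (0:EuclideanSpace ℝ (Fin n)) R \ closure (ball 0 1)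
    with hΩdef
  set K : Set (EuclideanSpace ℝ (Fin n)) := closure Ω with hKdef
  have hΩopen : IsOpen Ω := isOpen_ball.sdiff isClosed_closure
  set w : EuclideanSpace ℝ (Fin n) → ℝ :=
    fun x => Real.exp (-α * qfun x) - Real.exp (-α * R^2) with hwdef
  have hwcont : Continuous w := by
    apply Continuous.sub _ continuous_const
    exact Real.continuous_exp.comp (continuous_const.mul qfun_cont)
  -- compactness of K
  have hKsub : K ⊆ closedBall (0:EuclideanSpace ℝ (Fin n)) R := by
    intro y hy
    rw [mem_closedBall_zero_iff]
    exact (closure_omega_subset hy).2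
  have hKc : IsCompact K :=
    (isCompact_closedBall (0:EuclideanSpace ℝ (Fin n)) R).of_isClosed_subset isClosed_closure hKsub
  have hKne : K.Nonempty := by
    refine ⟨((1+R)/2) • (EuclideanSpace.single (⟨0, hn0⟩ : Fin n) 1), subset_closure ?_⟩
    rw [omega_mem]
    rw [norm_smul, Real.norm_eq_abs, abs_of_pos (by linarith), EuclideanSpace.norm_single,
      Real.norm_eq_abs, abs_one, mul_one]
    constructor <;> linarith
  -- the key estimate for every σ > 0
  have key : ∀ σ : ℝ, 0 < σ → ∀ y ∈ K, -(σ * R^2) ≤ u y - w y - σ * qfun y := by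
    intro σ hσ
    set F : EuclideanSpace ℝ (Fin n) → ℝ := fun y => u y - w y - σ * qfun y with hFdef
    have hFc : ContinuousOn F K := by
      apply ContinuousOn.sub
      · exact hu.continuousOn.sub hwcont.continuousOn
      · exact (continuous_const.mul qfun_cont).continuousOn
    obtain ⟨z, hzK, hzmin⟩ := hKc.exists_isMinOn hKne hFc
    obtain ⟨h1, h2⟩ := closure_omega_subset hzK
    have hqz : qfun z = ‖z‖^2 := qfun_eq_norm z
    have hqz1 : 1 ≤ qfun z := by rw [hqz]; nlinarith
    have hzlow : -(σ * R^2) ≤ F z := by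
      by_cases hzΩ : z ∈ Ω
      · -- interior: contradiction via second derivative test
        exfalso
        have hKnz : K ∈ nhds z := Filter.mem_of_superset (hΩopen.mem_nhds hzΩ) subset_closure
        have hCD : ContDiffAt ℝ 2 u z := hu.contDiffAt hKnz
        have hFmin : IsLocalMin F z := hzmin.isLocalMin hKnz
        -- for each coordinate direction
        have hineq : ∀ i : Fin n,
            0 ≤ fderiv ℝ (fderiv ℝ u) z (EuclideanSpace.single i 1) (EuclideanSpace.single i 1)
              - Real.exp (-α * qfun z) * (α^2 * (2 * z i)^2 - 2*α) - σ * 2 := by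
          intro i
          set e : EuclideanSpace ℝ (Fin n) := EuclideanSpace.single i 1 with hedef
          set Du : ℝ → ℝ := fun t => fderiv ℝ u (z + t • e) e with hDu
          set Dw : ℝ → ℝ :=
            fun t => Real.exp (-α * (qfun z + (2 * z i) * t + t^2)) * (-α * ((2 * z i) + 2*t)) with hDw
          set Dq : ℝ → ℝ := fun t => (2 * z i) + 2*t with hDq
          set g : ℝ → ℝ := fun t => F (z + t • e) with hg
          have hglocmin : IsLocalMin g 0 := by
            have hcont : ContinuousAt (fun t : ℝ => z + t • e) 0 := by fun_prop
            have hFmin' : IsLocalMin F ((fun t : ℝ => z + t • e) 0) := by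
              simpa using hFmin
            have := IsLocalMin.comp_continuous (g := fun t : ℝ => z + t • e) (b := (0:ℝ))
              hFmin' hcont
            exact this
          have hwline : (fun s : ℝ => w (z + s • e))
              = fun s => Real.exp (-α * (qfun z + (2 * z i) * s + s^2)) - Real.exp (-α * R^2) := by
            funext s
            rw [hwdef]
            simp only
            rw [qfun_line z i s]
          have hqline : (fun s : ℝ => qfun (z + s • e)) = fun s => qfun z + (2 * z i) * s + s^2 := by
            funext s
            rw [qfun_line z i s]
          have hgev : ∀ᶠ t in nhds (0:ℝ), HasDerivAt g (Du t - Dw t - σ * Dq t) t := by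
            filter_upwards [line_deriv e hCD] with t ht
            have hwd : HasDerivAt (fun s : ℝ => w (z + s • e)) (Dw t) t := by
              rw [hwline]
              exact expline_hasDeriv α (qfun z) (2 * z i) (Real.exp (-α * R^2)) t
            have hqd : HasDerivAt (fun s : ℝ => σ * qfun (z + s • e)) (σ * Dq t) t := by
              have hq' : (fun s : ℝ => σ * qfun (z + s • e))
                  = fun s => σ * (qfun z + (2 * z i) * s + s^2) := by
                funext s; rw [qfun_line z i s]
              rw [hq']
              exact (poly_hasDeriv (qfun z) (2 * z i) t).const_mul σ
            exact (ht.sub hwd).sub hqd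
          have hgdiff : ∀ᶠ t in nhds (0:ℝ), DifferentiableAt ℝ g t :=
            hgev.mono fun t ht => ht.differentiableAt
          have hderiv_eq : deriv g =ᶠ[nhds (0:ℝ)] fun t => Du t - Dw t - σ * Dq t :=
            hgev.mono fun t ht => ht.deriv
          have hDuEq : Du =ᶠ[nhds (0:ℝ)] deriv (fun s : ℝ => u (z + s • e)) :=
            (line_deriv e hCD).mono fun t ht => ht.deriv.symm
          have HA : HasDerivAt Du (fderiv ℝ (fderiv ℝ u) z e e) 0 :=
            (second_deriv_line e hCD).congr_of_eventuallyEq hDuEq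
          have HB : HasDerivAt Dw (Real.exp (-α * qfun z) * (α^2 * (2 * z i)^2 - 2*α)) 0 :=
            expline_deriv2 α (qfun z) (2 * z i)
          have HQ : HasDerivAt (fun t => σ * Dq t) (σ * 2) 0 :=
            (poly_deriv2 (qfun z) (2 * z i)).const_mul σ
          have HD : HasDerivAt (deriv g)
              (fderiv ℝ (fderiv ℝ u) z e e
                - Real.exp (-α * qfun z) * (α^2 * (2 * z i)^2 - 2*α) - σ * 2) 0 :=
            (((HA.sub HB).sub HQ)).congr_of_eventuallyEq hderiv_eq
          exact ml hglocmin hgdiff HD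
        have hsum : 0 ≤ ∑ i : Fin n,
            (fderiv ℝ (fderiv ℝ u) z (EuclideanSpace.single i 1) (EuclideanSpace.single i 1)
              - Real.exp (-α * qfun z) * (α^2 * (2 * z i)^2 - 2*α) - σ * 2) :=
          Finset.sum_nonneg fun i _ => hineq i
        have hlapl : lapl u z = ∑ i : Fin n,
            fderiv ℝ (fderiv ℝ u) z (EuclideanSpace.single i 1) (EuclideanSpace.single i 1) := by
          unfold lapl
          congr 1
          funext i
          rw [iteratedFDeriv_two_apply]
          simp
        have hsplit : ∑ i : Fin n,
            (fderiv ℝ (fderiv ℝ u) z (EuclideanSpace.single i 1) (EuclideanSpace.single i 1)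
              - Real.exp (-α * qfun z) * (α^2 * (2 * z i)^2 - 2*α) - σ * 2)
            = lapl u z - Real.exp (-α * qfun z) * (4*α^2 * qfun z - 2*α*n) - n * (σ * 2) := by
          rw [hlapl]
          rw [Finset.sum_sub_distrib, Finset.sum_sub_distrib]
          have hBsum : ∑ i : Fin n, Real.exp (-α * qfun z) * (α^2 * (2 * z i)^2 - 2*α)
              = Real.exp (-α * qfun z) * (4*α^2 * qfun z - 2*α*(n:ℝ)) := by
            rw [← Finset.mul_sum]
            congr 1
            have h4 : ∀ i : Fin n, α^2 * (2 * z i)^2 - 2*α = 4*α^2 * (z i)^2 - 2*α := by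
              intro i; ring
            simp only [h4]
            rw [Finset.sum_sub_distrib, Finset.sum_const, Finset.card_univ, Fintype.card_fin,
              nsmul_eq_mul, ← Finset.mul_sum]
            unfold qfun
            ring
          rw [hBsum]
          rw [Finset.sum_const, Finset.card_univ, Fintype.card_fin, nsmul_eq_mul]
        rw [hsplit] at hsum
        rw [hpde z hzΩ] at hsum
        have hexp : 0 < Real.exp (-α * qfun z) := Real.exp_pos _
        have hfle : f (u z) ≤ 0 := hfnonpos (u z)
        have hbig : 2 * α^2 ≤ 4*α^2 * qfun z - 2*α*(n:ℝ) := by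
          nlinarith [hqz1, hnpos]
        nlinarith [mul_le_mul_of_nonneg_left hbig (le_of_lt hexp),
          mul_pos hexp (show (0:ℝ) < 2*α^2 by positivity), mul_pos hσ hnpos]
      · -- boundary: ‖z‖ = 1 or ‖z‖ = R
        have hbd : ‖z‖ = 1 ∨ ‖z‖ = R := by
          by_contra hcon
          push_neg at hcon
          exact hzΩ (omega_mem.mpr ⟨lt_of_le_of_ne h1 (Ne.symm hcon.1),
            lt_of_le_of_ne h2 hcon.2⟩)
        rcases hbd with hb | hb
        · have hq1 : qfun z = 1 := by rw [qfun_eq_norm, hb]; norm_num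
          have huz : u z = 1 := hb1 z hb
          have hwz : w z ≤ 1 := by
            rw [hwdef]
            simp only
            have h1' : Real.exp (-α * qfun z) ≤ 1 := by
              apply Real.exp_le_one_iff.mpr
              nlinarith
            have h2' : 0 < Real.exp (-α * R^2) := Real.exp_pos _
            linarith
          have : F z = 1 - w z - σ * 1 := by rw [hFdef]; simp only; rw [huz, hq1]
          rw [this]
          have hR2 : (1:ℝ) ≤ R^2 := by nlinarith
          nlinarith [mul_le_mul_of_nonneg_left hR2 hσ.le]
        · have hqR : qfun z = R^2 := by rw [qfun_eq_norm, hb]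
          have huz : u z = 0 := hbR z hb
          have hwz : w z = 0 := by rw [hwdef]; simp only; rw [hqR]; ring
          have : F z = -(σ * R^2) := by rw [hFdef]; simp only; rw [huz, hwz, hqR]; ring
          rw [this]
    intro y hy
    calc -(σ * R^2) ≤ F z := hzlow
      _ ≤ F y := hzmin hy
      _ = u y - w y - σ * qfun y := rfl
  -- conclude: w x ≤ u x
  intro x hx
  have hq0 : 0 ≤ qfun x := by rw [qfun_eq_norm]; positivity
  by_contra hcon
  push_neg at hcon
  have hd : 0 < (w x - u x) := by
    have hwx : w x = Real.exp (-α * qfun x) - Real.exp (-α * R^2) := rfl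
    linarith
  obtain ⟨d, hddef⟩ : ∃ d : ℝ, d = w x - u x := ⟨_, rfl⟩
  obtain ⟨σ, hσdef⟩ : ∃ σ : ℝ, σ = d / (2 * R^2) := ⟨_, rfl⟩
  have hdpos : 0 < d := hddef ▸ hd
  have hσpos : 0 < σ := by
    rw [hσdef]
    apply div_pos hdpos
    nlinarith
  have hkey : -(σ * R^2) ≤ u x - w x - σ * qfun x := key σ hσpos x hx
  have hσR : σ * R^2 = d / 2 := by
    rw [hσdef]
    field_simp
  have e2 : 0 ≤ σ * qfun x := mul_nonneg hσpos.le hq0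
  linarith
end minprinciple


set_option maxHeartbeats 1000000 in
theorem stmt_4 (n : ℕ) (hn : 2 ≤ n) (R : ℝ) (hR : 1 < R)
    (f : ℝ → ℝ) (hf : ContDiff ℝ 1 f) (hfnonpos : ∀ s, f s ≤ 0)
    (Ω : Set (EuclideanSpace ℝ (Fin n)))
    (hΩ : Ω = ball (0 : EuclideanSpace ℝ (Fin n)) R \ closure (ball 0 1))
    (u : EuclideanSpace ℝ (Fin n) → ℝ)
    (hu : ContDiffOn ℝ 2 u (closure Ω))
    (hpde : ∀ x ∈ Ω, lapl u x = f (u x))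
    (hb1 : ∀ x : EuclideanSpace ℝ (Fin n), ‖x‖ = 1 → u x = 1)
    (hbR : ∀ x : EuclideanSpace ℝ (Fin n), ‖x‖ = R → u x = 0)
    (x₀ : EuclideanSpace ℝ (Fin n)) (hx₀ : x₀ ∈ sphere (0 : EuclideanSpace ℝ (Fin n)) R)
    (hx₀1 : 0 < x₀ ⟨0, by omega⟩) :
    ∃ δ > 0, ∀ x ∈ Ω, dist x x₀ < δ →
      fderiv ℝ u x (EuclideanSpace.single ⟨0, by omega⟩ (1 : ℝ)) < 0 := by
  subst hΩ
  set Ω : Set (EuclideanSpace ℝ (Fin n)) :=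
    ball (0:EuclideanSpace ℝ (Fin n)) R \ closure (ball 0 1) with hΩdef
  set K : Set (EuclideanSpace ℝ (Fin n)) := closure Ω with hKdef
  have hΩopen : IsOpen Ω := isOpen_ball.sdiff isClosed_closure
  have hRpos : (0:ℝ) < R := by linarith
  have hn0 : 0 < n := by omega
  set i₀ : Fin n := ⟨0, hn0⟩ with hi₀
  set e₁ : EuclideanSpace ℝ (Fin n) := EuclideanSpace.single i₀ 1 with he₁
  set α : ℝ := (n:ℝ) with hα
  have hnpos : (0:ℝ) < α := by rw [hα]; exact_mod_cast hn0
  have hx₀R : ‖x₀‖ = R := by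
    have := mem_sphere_zero_iff_norm.mp hx₀
    exact this
  have hx₀K : x₀ ∈ K := sphere_subset_closure hR hx₀R
  have hux₀ : u x₀ = 0 := hbR x₀ hx₀R
  have hUD : UniqueDiffOn ℝ K := uniqueDiffOn_closure_omega hR
  have hmin : ∀ y ∈ K, Real.exp (-α * qfun y) - Real.exp (-α * R^2) ≤ u y :=
    min_principle hn hR hfnonpos hu hpde hb1 hbR
  -- the derivative within K
  set Du : EuclideanSpace ℝ (Fin n) → (EuclideanSpace ℝ (Fin n) →L[ℝ] ℝ) := fun y => fderivWithin ℝ u K y with hDu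
  have hDiffW : ∀ y ∈ K, HasFDerivWithinAt u (Du y) K y := fun y hy =>
    ((hu.differentiableOn (by norm_num)) y hy).hasFDerivWithinAt
  have hcontD : ContinuousOn Du K := hu.continuousOn_fderivWithin hUD one_le_two
  set c₁ : EuclideanSpace ℝ (Fin n) →L[ℝ] ℝ := Du x₀ with hc₁
  -- RADIAL estimate : c₁ x₀ ≤ -(2αR² e^{-αR²})
  set c : ℝ := 2*α*R^2*Real.exp (-α*R^2) with hc
  have hcpos : 0 < c := by rw [hc]; positivity
  have hrad : c₁ x₀ ≤ -c := by
    set b' : ℝ := (1 - 1/R)/2 with hb'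
    have hs₁ : 0 < 1 - 1/R := by
      have : 1/R < 1 := by rw [div_lt_one hRpos]; exact hR
      linarith
    have hb'pos : 0 < b' := by rw [hb']; linarith
    set γ : ℝ → EuclideanSpace ℝ (Fin n) := fun s => (1 - s) • x₀ with hγ
    have hγnorm : ∀ s, ‖γ s‖ = |1 - s| * R := by
      intro s
      rw [hγ]; simp only
      rw [norm_smul, Real.norm_eq_abs, hx₀R]
    have hmaps : MapsTo γ (Icc 0 b') K := by
      intro s hs
      rcases eq_or_lt_of_le hs.1 with h0 | h0
      · rw [hγ]; simp only [← h0]; rw [sub_zero, one_smul]; exact hx₀K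
      · apply subset_closure
        rw [omega_mem, hγnorm s]
        have hsb : s ≤ b' := hs.2
        have h1s : 1 - s > 1/R := by rw [hb'] at hsb; linarith
        have habs : |1 - s| = 1 - s := abs_of_pos (by nlinarith [one_div_pos.mpr hRpos])
        rw [habs]
        constructor
        · rw [gt_iff_lt, div_lt_iff₀ hRpos] at h1s
          linarith [h1s]
        · rw [sub_mul, one_mul]
          linarith [mul_pos h0 hRpos]
    have hγd : HasDerivWithinAt γ (-x₀) (Icc 0 b') 0 := by
      have : HasDerivAt γ ((-1 : ℝ) • x₀) 0 := by
        rw [hγ]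
        exact (((hasDerivAt_id (0:ℝ)).const_sub 1).smul_const x₀)
      have h2 : ((-1 : ℝ) • x₀ : EuclideanSpace ℝ (Fin n)) = -x₀ := by module
      rw [h2] at this
      exact this.hasDerivWithinAt
    have hγ0 : γ 0 = x₀ := by rw [hγ]; simp
    have hgd : HasDerivWithinAt (fun s => u (γ s)) (c₁ (-x₀)) (Icc 0 b') 0 := by
      have hD0 : HasFDerivWithinAt u c₁ K (γ 0) := by rw [hγ0]; exact hDiffW x₀ hx₀K
      exact hD0.comp_hasDerivWithinAt 0 hγd hmaps
    -- comparison function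
    set hfun : ℝ → ℝ := fun s => Real.exp (-α*((1-s)^2*R^2)) - Real.exp (-α*R^2) with hhfun
    have hfun0 : hfun 0 = 0 := by rw [hhfun]; norm_num
    have hfund : HasDerivAt hfun c 0 := by
      have h1 : HasDerivAt (fun s:ℝ => 1 - s) (-1) 0 := (hasDerivAt_id (0:ℝ)).const_sub 1
      have h2 := h1.pow 2
      have h3 := h2.mul_const (R^2)
      have h4 := h3.const_mul (-α)
      have h5 := h4.exp.sub_const (Real.exp (-α*R^2))
      refine h5.congr_deriv ?_
      rw [hc]
      norm_num
      ring
    have hg0 : u (γ 0) = 0 := by rw [hγ0]; exact hux₀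
    -- slopes compare
    have hcmp : ∀ s ∈ Ioc 0 b', slope hfun 0 s ≤ slope (fun s => u (γ s)) 0 s := by
      intro s hs
      rw [slope_def_field, slope_def_field, hfun0, hg0, sub_zero, sub_zero, sub_zero]
      have hval : hfun s ≤ u (γ s) := by
        have hK : γ s ∈ K := hmaps ⟨hs.1.le, hs.2⟩
        have hq : qfun (γ s) = (1-s)^2*R^2 := by
          rw [qfun_eq_norm, hγnorm s, mul_pow, sq_abs]
        have := hmin (γ s) hK
        rw [hq] at this
        exact this
      exact (div_le_div_iff_of_pos_right hs.1).mpr hval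
    have hNeBot : (nhdsWithin (0:ℝ) (Ioc 0 b')).NeBot := by
      apply mem_closure_iff_nhdsWithin_neBot.mp
      rw [closure_Ioc hb'pos.ne]
      exact ⟨le_refl 0, hb'pos.le⟩
    have htg : Filter.Tendsto (slope (fun s => u (γ s)) 0) (nhdsWithin 0 (Ioc 0 b'))
        (nhds (c₁ (-x₀))) := by
      have h0 := hasDerivWithinAt_iff_tendsto_slope.mp hgd
      apply h0.mono_left (nhdsWithin_mono 0 ?_)
      intro s hs
      refine ⟨⟨hs.1.le, hs.2⟩, ?_⟩
      simp only [Set.mem_singleton_iff]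
      exact hs.1.ne'
    have hth : Filter.Tendsto (slope hfun 0) (nhdsWithin 0 (Ioc 0 b')) (nhds c) := by
      have h0 := hasDerivAt_iff_tendsto_slope.mp hfund
      apply h0.mono_left (nhdsWithin_mono 0 ?_)
      intro s hs
      exact hs.1.ne'
    have hev : slope hfun 0 ≤ᶠ[nhdsWithin (0:ℝ) (Ioc 0 b')] slope (fun s => u (γ s)) 0 := by
      filter_upwards [eventually_mem_nhdsWithin] with s hs
      exact hcmp s hs
    have hle : c ≤ c₁ (-x₀) := le_of_tendsto_of_tendsto hth htg hev
    rw [map_neg] at hle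
    linarith
  -- TANGENTIAL estimate : c₁ τ = 0
  set coef : ℝ := x₀ i₀ / R^2 with hcoef
  have hcoefpos : 0 < coef := by rw [hcoef]; positivity
  set τ : EuclideanSpace ℝ (Fin n) := e₁ - coef • x₀ with hτ
  have hinner_ex : (inner ℝ x₀ e₁ : ℝ) = x₀ i₀ := by
    rw [he₁, real_inner_comm]
    rw [EuclideanSpace.inner_single_left]
    simp
  have hinner_xx : (inner ℝ x₀ x₀ : ℝ) = R^2 := by
    rw [real_inner_self_eq_norm_sq, hx₀R]
  have hperp : (inner ℝ x₀ τ : ℝ) = 0 := by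
    rw [hτ, inner_sub_right, real_inner_smul_right, hinner_ex, hinner_xx, hcoef]
    field_simp
    ring
  have htan : c₁ τ = 0 := by
    set C : ℝ := ‖τ‖^2 with hC
    have hnorm_form : ∀ t : ℝ, ‖x₀ + t • τ‖ = Real.sqrt (R^2 + t^2 * C) := by
      intro t
      have hin : (inner ℝ (x₀ + t • τ) (x₀ + t • τ) : ℝ) = R^2 + t^2 * C := by
        have h1 : (inner ℝ x₀ (t • τ) : ℝ) = t * (inner ℝ x₀ τ : ℝ) := real_inner_smul_right _ _ _
        have h2 : (inner ℝ (t • τ) x₀ : ℝ) = t * (inner ℝ τ x₀ : ℝ) := real_inner_smul_left _ _ _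
        have h3 : (inner ℝ (t • τ) (t • τ) : ℝ) = t * (t * (inner ℝ τ τ : ℝ)) := by
          rw [real_inner_smul_left, real_inner_smul_right]
        have h4 : (inner ℝ τ x₀ : ℝ) = 0 := by rw [real_inner_comm]; exact hperp
        have h5 : (inner ℝ τ τ : ℝ) = C := by rw [hC, real_inner_self_eq_norm_sq]
        rw [inner_add_add_self, h1, h2, h3, h4, h5, hperp, hinner_xx]
        ring
      rw [← Real.sqrt_sq (norm_nonneg _), ← real_inner_self_eq_norm_sq, hin]
    have hsq_pos : ∀ t : ℝ, 0 < R^2 + t^2 * C := by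
      intro t
      have : (0:ℝ) ≤ t^2 * C := by rw [hC]; positivity
      nlinarith
    have hnz : ∀ t : ℝ, ‖x₀ + t • τ‖ ≠ 0 := by
      intro t
      rw [hnorm_form t]
      exact (Real.sqrt_pos.mpr (hsq_pos t)).ne'
    set φ : ℝ → ℝ := fun t => R / Real.sqrt (R^2 + t^2 * C) with hφ
    set γ₂ : ℝ → EuclideanSpace ℝ (Fin n) := fun t => φ t • (x₀ + t • τ) with hγ₂
    have hγ₂norm : ∀ t, ‖γ₂ t‖ = R := by
      intro t
      rw [hγ₂]; simp only
      rw [norm_smul, Real.norm_eq_abs, hφ]; simp only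
      rw [hnorm_form t, abs_div, abs_of_pos hRpos, abs_of_pos (Real.sqrt_pos.mpr (hsq_pos t))]
      field_simp
      exact div_self (Real.sqrt_pos.mpr (hsq_pos t)).ne'
    have huγ₂ : ∀ t, u (γ₂ t) = 0 := fun t => hbR _ (hγ₂norm t)
    have hφ0 : φ 0 = 1 := by
      rw [hφ]; simp only
      rw [zero_pow (by norm_num), zero_mul, add_zero, Real.sqrt_sq hRpos.le]
      field_simp
    have hγ₂0 : γ₂ 0 = x₀ := by
      rw [hγ₂]; simp only
      rw [hφ0, zero_smul, add_zero, one_smul]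
    have hφd : HasDerivAt φ 0 0 := by
      have h1 : HasDerivAt (fun t : ℝ => R^2 + t^2 * C) (2*0*C) 0 := by
        have := ((hasDerivAt_pow 2 (0:ℝ)).mul_const C).const_add (R^2)
        simpa using this
      have h2 : HasDerivAt (fun t : ℝ => Real.sqrt (R^2 + t^2 * C))
          ((2*0*C) / (2 * Real.sqrt (R^2 + 0^2*C))) 0 := h1.sqrt (hsq_pos 0).ne'
      have h3 := (hasDerivAt_const (0:ℝ) R).div h2 (by
        rw [show (0:ℝ)^2*C = 0 by ring, add_zero]
        exact (Real.sqrt_pos.mpr (by positivity)).ne')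
      refine h3.congr_deriv ?_
      simp
    have hψd : HasDerivAt (fun t : ℝ => x₀ + t • τ) τ 0 := by
      simpa using ((hasDerivAt_id (0:ℝ)).smul_const τ).const_add x₀
    have hγ₂d : HasDerivAt γ₂ τ 0 := by
      have := hφd.smul hψd
      rw [hγ₂]
      refine this.congr_deriv ?_
      rw [hφ0]
      simp
    have hcomp : HasDerivAt (fun t => u (γ₂ t)) (c₁ τ) 0 := by
      have hmaps2 : MapsTo γ₂ univ K := fun t _ => sphere_subset_closure hR (hγ₂norm t)
      have hwd : HasDerivWithinAt γ₂ τ univ 0 := hγ₂d.hasDerivWithinAt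
      have hD0 : HasFDerivWithinAt u c₁ K (γ₂ 0) := by rw [hγ₂0]; exact hDiffW x₀ hx₀K
      have := hD0.comp_hasDerivWithinAt 0 hwd hmaps2
      rw [hasDerivWithinAt_univ] at this
      exact this
    have hconst : HasDerivAt (fun t : ℝ => u (γ₂ t)) 0 0 := by
      have : (fun t : ℝ => u (γ₂ t)) = fun _ => (0:ℝ) := funext huγ₂
      rw [this]
      exact hasDerivAt_const 0 0
    exact (hcomp.unique hconst)
  -- combine : c₁ e₁ < 0
  have hdecomp : c₁ e₁ = c₁ τ + coef * (c₁ x₀) := by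
    have : e₁ = τ + coef • x₀ := by rw [hτ]; module
    rw [this, map_add, map_smul]
    simp
  have hc₁neg : c₁ e₁ < 0 := by
    rw [hdecomp, htan, zero_add]
    calc coef * (c₁ x₀) ≤ coef * (-c) := by
          apply mul_le_mul_of_nonneg_left hrad hcoefpos.le
      _ < 0 := by nlinarith
  -- continuity of the derivative gives the neighborhood
  have hcDe : ContinuousWithinAt (fun y => Du y e₁) K x₀ := by
    have h1 : ContinuousWithinAt Du K x₀ := (hcontD x₀ hx₀K)
    exact ((ContinuousLinearMap.apply ℝ ℝ e₁).continuous.continuousAt).comp_continuousWithinAt h1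
  have hevneg : ∀ᶠ y in nhdsWithin x₀ K, Du y e₁ < 0 := by
    have : Filter.Tendsto (fun y => Du y e₁) (nhdsWithin x₀ K) (nhds (c₁ e₁)) := hcDe
    exact this.eventually_lt_const hc₁neg
  rw [eventually_nhdsWithin_iff] at hevneg
  rw [Metric.eventually_nhds_iff] at hevneg
  obtain ⟨δ, hδpos, hδ⟩ := hevneg
  refine ⟨δ, hδpos, fun x hxΩ hxd => ?_⟩
  have hxK : x ∈ K := subset_closure hxΩ
  have hfd : fderiv ℝ u x = Du x := by
    rw [hDu]
    exact (fderivWithin_of_mem_nhds (Filter.mem_of_superset (hΩopen.mem_nhds hxΩ)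
      subset_closure)).symm
  rw [hfd]
  exact hδ hxd hxK
end

section
/- (Non-degeneracy.) Let n ≥ 2, r > 1, and let f : ℝ → ℝ be C¹ with f(s) ≤ 0 for all s. Let v ∈ C²(closure(B_r \ closure(B_1))) be a radially symmetric function with Δv = f(v) in B_r \ closure(B_1), v = 1 on |x| = 1, v = −1 on |x| = r, whose free boundary F = ∂{v > 0} is the sphere {|x| = ρ} for some ρ ∈ (1, r), with {v > 0} = {x : 1 ≤ |x| < ρ} (intersected with the closed annulus). Then there exists a constant c > 0, depending only on n and ρ, such that v(x) ≥ c · dist(x, F) for every x in {v > 0}. -/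
open Metric Set Filter Topology RealInnerProductSpace

/-- The free boundary of `v`: the boundary, within the domain `Ω`, of the positivity set. -/
def freeBoundary {n : ℕ} (Ω : Set (EuclideanSpace ℝ (Fin n)))
    (v : EuclideanSpace ℝ (Fin n) → ℝ) : Set (EuclideanSpace ℝ (Fin n)) :=
  Ω ∩ frontier {x | x ∈ Ω ∧ 0 < v x}

lemma second_dir {n : ℕ} {v : EuclideanSpace ℝ (Fin n) → ℝ}
    {p : EuclideanSpace ℝ (Fin n)} (hv : ContDiffAt ℝ 2 v p)
    (w : EuclideanSpace ℝ (Fin n)) :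
    iteratedFDeriv ℝ 2 v p ![w, w]
      = deriv (fun s : ℝ => fderiv ℝ v (p + s • w) w) 0 := by
  have h1 : ContDiffAt ℝ 1 (fderiv ℝ v) p := hv.fderiv_right (by norm_num)
  have hd : DifferentiableAt ℝ (fderiv ℝ v) p := h1.differentiableAt one_ne_zero
  have hF : HasFDerivAt (fun y => fderiv ℝ v y w)
      ((ContinuousLinearMap.apply ℝ ℝ w).comp (fderiv ℝ (fderiv ℝ v) p)) p :=
    ((ContinuousLinearMap.apply ℝ ℝ w).hasFDerivAt).comp p hd.hasFDerivAt
  have hline : HasDerivAt (fun s : ℝ => p + s • w) w 0 := by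
    simpa using ((hasDerivAt_id (0:ℝ)).smul_const w).const_add p
  have hF0 : HasFDerivAt (fun y => fderiv ℝ v y w)
      ((ContinuousLinearMap.apply ℝ ℝ w).comp (fderiv ℝ (fderiv ℝ v) p)) (p + (0:ℝ) • w) := by
    simpa using hF
  have hcomp : HasDerivAt (fun s : ℝ => fderiv ℝ v (p + s • w) w)
      ((((ContinuousLinearMap.apply ℝ ℝ) w).comp (fderiv ℝ (fderiv ℝ v) p)) w) 0 :=
    hF0.comp_hasDerivAt (l := fun y => fderiv ℝ v y w) 0 hline
  rw [hcomp.deriv, iteratedFDeriv_two_apply]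
  simp

set_option maxHeartbeats 1000000 in
/-- Non-degeneracy: `v ≥ c · dist(·, F)` on the positivity set, with `c = c(n, ρ)`. -/
theorem stmt_16 (n : ℕ) (hn : 2 ≤ n) (ρ : ℝ) (hρ : 1 < ρ) :
    ∃ c > (0 : ℝ), ∀ (r : ℝ), ρ < r →
      ∀ (f : ℝ → ℝ), ContDiff ℝ 1 f → (∀ s, f s ≤ 0) →
      ∀ (Ω : Set (EuclideanSpace ℝ (Fin n))),
        Ω = ball (0 : EuclideanSpace ℝ (Fin n)) r \ closure (ball 0 1) →
      ∀ (v : EuclideanSpace ℝ (Fin n) → ℝ),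
        ContDiffOn ℝ 2 v (closure Ω) →
        -- radial symmetry
        (∀ x ∈ closure Ω, ∀ y ∈ closure Ω, ‖x‖ = ‖y‖ → v x = v y) →
        (∀ x ∈ Ω, lapl v x = f (v x)) →
        (∀ x : EuclideanSpace ℝ (Fin n), ‖x‖ = 1 → v x = 1) →
        (∀ x : EuclideanSpace ℝ (Fin n), ‖x‖ = r → v x = -1) →
        -- the free boundary is the sphere of radius ρ
        freeBoundary Ω v = sphere (0 : EuclideanSpace ℝ (Fin n)) ρ →
        -- the positivity set is the inner annulus `1 ≤ |x| < ρ`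
        (∀ x ∈ closure Ω, (0 < v x ↔ ‖x‖ < ρ)) →
        ∀ x ∈ closure Ω, 0 < v x →
          c * infDist x (freeBoundary Ω v) ≤ v x := by
  obtain ⟨k, rfl⟩ : ∃ k, n = k + 2 := ⟨n - 2, by omega⟩
  have hρ0 : (0:ℝ) < ρ := lt_trans one_pos hρ
  refine ⟨(ρ ^ (k+2))⁻¹, by positivity, ?_⟩
  intro r hr f hf hf0 Ω hΩ v hv2 hsym hlapl hb1 hbr hFB hpos x hx hvx
  have hr1 : (1:ℝ) < r := hρ.trans hr
  have hΩ' : Ω = ball (0:EuclideanSpace ℝ (Fin (k+2))) r \ closedBall 0 1 := by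
    rw [hΩ, closure_ball (0:EuclideanSpace ℝ (Fin (k+2))) one_ne_zero]
  have hmem : ∀ y : EuclideanSpace ℝ (Fin (k+2)), y ∈ Ω ↔ 1 < ‖y‖ ∧ ‖y‖ < r := fun y => by
    rw [hΩ', mem_diff, mem_ball_zero_iff, mem_closedBall_zero_iff, not_le, and_comm]
  have hΩopen : IsOpen Ω := by
    rw [hΩ']; exact isOpen_ball.sdiff isClosed_closedBall
  have hCD : ∀ y ∈ Ω, ContDiffAt ℝ 2 v y := fun y hy =>
    hv2.contDiffAt (mem_nhds_iff.2 ⟨Ω, subset_closure, hΩopen, hy⟩)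
  -- basic unit vectors
  set e₀ : EuclideanSpace ℝ (Fin (k+2)) := EuclideanSpace.single (0 : Fin (k+2)) (1:ℝ) with he₀
  have hnorm_smul : ∀ (t : ℝ) (w : EuclideanSpace ℝ (Fin (k+2))), ‖w‖ = 1 → ‖t • w‖ = |t| := by
    intro t w hw
    rw [norm_smul, hw, mul_one, Real.norm_eq_abs]
  have hnorme₀ : ‖e₀‖ = 1 := by simp [he₀]
  -- membership facts for radial points
  have hIoomem : ∀ t ∈ Ioo (1:ℝ) r, t • e₀ ∈ Ω := by
    intro t ht
    rw [hmem, hnorm_smul t e₀ hnorme₀, abs_of_pos (lt_trans one_pos ht.1)]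
    exact ⟨ht.1, ht.2⟩
  have hIccmem : ∀ t ∈ Icc (1:ℝ) r, t • e₀ ∈ closure Ω := by
    intro t ht
    have hmt : MapsTo (fun s : ℝ => s • e₀) (Ioo 1 r) Ω := fun s hs => hIoomem s hs
    have hcl : t ∈ closure (Ioo (1:ℝ) r) := by
      rw [closure_Ioo (by linarith : (1:ℝ) ≠ r)]; exact ht
    exact map_mem_closure (f := fun s : ℝ => s • e₀)
      (continuous_id.smul continuous_const) hcl hmt
  -- the radial profile
  set φ : ℝ → ℝ := fun t => v (t • e₀) with hφdef
  set φ1 : ℝ → ℝ := fun t => fderiv ℝ v (t • e₀) e₀ with hφ1def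
  set φ2 : ℝ → ℝ := deriv φ1 with hφ2def
  have hφcont : ContinuousOn φ (Icc 1 r) :=
    hv2.continuousOn.comp ((continuous_id.smul continuous_const).continuousOn) hIccmem
  have hφ_1 : φ 1 = 1 := by
    apply hb1
    rw [hnorm_smul 1 e₀ hnorme₀]; norm_num
  have hφpos : ∀ t ∈ Ico (1:ℝ) ρ, 0 < φ t := by
    intro t ht
    refine (hpos _ (hIccmem t ⟨ht.1, by linarith [ht.2, hr]⟩)).2 ?_
    rw [hnorm_smul t e₀ hnorme₀, abs_of_pos (by linarith [ht.1] : (0:ℝ) < t)]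
    exact ht.2
  have hρIcc : ρ ∈ Icc (1:ℝ) r := ⟨hρ.le, hr.le⟩
  have hφρ : φ ρ = 0 := by
    have hle : φ ρ ≤ 0 := by
      by_contra h
      push_neg at h
      have := (hpos _ (hIccmem ρ hρIcc)).1 h
      rw [hnorm_smul ρ e₀ hnorme₀, abs_of_pos hρ0] at this
      exact lt_irrefl ρ this
    have hge : 0 ≤ φ ρ := by
      have hsub : Ioo (1:ℝ) ρ ⊆ Icc 1 r := fun s hs => ⟨hs.1.le, by linarith [hs.2, hr]⟩
      have h2 : Tendsto φ (𝓝[Ioo (1:ℝ) ρ] ρ) (𝓝 (φ ρ)) :=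
        (hφcont ρ hρIcc).mono_left (nhdsWithin_mono ρ hsub)
      have hev : ∀ᶠ t in 𝓝[Ioo (1:ℝ) ρ] ρ, 0 ≤ φ t :=
        eventually_nhdsWithin_of_forall (fun t ht => (hφpos t ⟨ht.1.le, ht.2⟩).le)
      have hne : (𝓝[Ioo (1:ℝ) ρ] ρ).NeBot := by
        rw [← mem_closure_iff_nhdsWithin_neBot, closure_Ioo (by linarith : (1:ℝ) ≠ ρ)]
        exact ⟨hρ.le, le_rfl⟩
      exact ge_of_tendsto h2 hev
    linarith
  -- derivatives of the radial profile
  have hsmul_line : ∀ (t : ℝ) (w : EuclideanSpace ℝ (Fin (k+2))),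
      HasDerivAt (fun s : ℝ => s • w) w t := by
    intro t w
    simpa using (hasDerivAt_id t).smul_const w
  have hφ1HasDeriv : ∀ t ∈ Ioo (1:ℝ) r, HasDerivAt φ (φ1 t) t := by
    intro t ht
    have h := ((hCD _ (hIoomem t ht)).differentiableAt (by norm_num)).hasFDerivAt
    exact h.comp_hasDerivAt t (hsmul_line t e₀)
  have hφ1Has : ∀ t ∈ Ioo (1:ℝ) r, HasDerivAt φ1 (φ2 t) t := by
    intro t ht
    have h1 : ContDiffAt ℝ 1 (fderiv ℝ v) (t • e₀) :=
      (hCD _ (hIoomem t ht)).fderiv_right (by norm_num)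
    have h2 : DifferentiableAt ℝ (fun y => fderiv ℝ v y e₀) (t • e₀) :=
      ((ContinuousLinearMap.apply ℝ ℝ e₀).differentiable.differentiableAt).comp _
        (h1.differentiableAt one_ne_zero)
    have h3 : DifferentiableAt ℝ φ1 t :=
      h2.comp (g := fun y => fderiv ℝ v y e₀) t ((hsmul_line t e₀).differentiableAt)
    exact h3.hasDerivAt
  -- norms of orthogonal combinations
  have hnorm_comb : ∀ (a b : ℝ) (w : EuclideanSpace ℝ (Fin (k+2))), ‖w‖ = 1 →
      (inner ℝ e₀ w : ℝ) = 0 → ‖a • e₀ + b • w‖ = Real.sqrt (a^2 + b^2) := by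
    intro a b w hw ho
    have h2 : ‖a • e₀ + b • w‖^2 = a^2 + b^2 := by
      rw [norm_add_sq_real, real_inner_smul_left, real_inner_smul_right, ho,
        hnorm_smul a e₀ hnorme₀, hnorm_smul b w hw]
      rw [sq_abs, sq_abs]
      ring
    rw [← Real.sqrt_sq (norm_nonneg (a • e₀ + b • w)), h2]
  -- the tangential second derivative
  have htang : ∀ t ∈ Ioo (1:ℝ) r, ∀ w : EuclideanSpace ℝ (Fin (k+2)), ‖w‖ = 1 →
      (inner ℝ e₀ w : ℝ) = 0 →
      iteratedFDeriv ℝ 2 v (t • e₀) ![w, w] = φ1 t / t := by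
    intro t ht w hw ho
    have ht0 : (0:ℝ) < t := lt_trans one_pos ht.1
    set q : ℝ → ℝ := fun s => Real.sqrt (t^2 + s^2) with hqdef
    have hq_pos : ∀ s, 0 < q s := fun s => Real.sqrt_pos.2 (by positivity)
    have hq0 : q 0 = t := by
      simp only [hqdef]
      rw [show t^2 + (0:ℝ)^2 = t^2 by ring, Real.sqrt_sq ht0.le]
    have hqHas : ∀ s : ℝ, HasDerivAt q (s / q s) s := by
      intro s
      have h1 : HasDerivAt (fun u : ℝ => t^2 + u^2) (2*s) s := by
        simpa using (hasDerivAt_pow 2 s).const_add (t^2)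
      have h2 := (Real.hasDerivAt_sqrt (by positivity : t^2+s^2 ≠ 0)).comp s h1
      convert (show HasDerivAt q _ s from h2) using 1
      rw [hqdef]
      field_simp
    have hqcont : Continuous q :=
      Real.continuous_sqrt.comp (continuous_const.add (continuous_pow 2))
    set U : Set ℝ := q ⁻¹' (Ioo (1:ℝ) r) with hUdef
    have hUopen : IsOpen U := isOpen_Ioo.preimage hqcont
    have hU0 : (0:ℝ) ∈ U := by
      simp only [hUdef, mem_preimage, hq0]
      exact ht
    have hnormline : ∀ s : ℝ, ‖t • e₀ + s • w‖ = q s := fun s => hnorm_comb t s w hw ho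
    have hkey : ∀ s ∈ U, fderiv ℝ v (t • e₀ + s • w) w = φ1 (q s) * (s / q s) := by
      intro s hs
      have hqs : q s ∈ Ioo (1:ℝ) r := hs
      have hmem1 : (t • e₀ + s • w) ∈ Ω := (hmem _).2 (by rw [hnormline s]; exact hqs)
      have hgHas : HasDerivAt (fun s' : ℝ => v (t • e₀ + s' • w))
          (fderiv ℝ v (t • e₀ + s • w) w) s := by
        have hline : HasDerivAt (fun s' : ℝ => t • e₀ + s' • w) w s :=
          (hsmul_line s w).const_add (t • e₀)
        exact (((hCD _ hmem1).differentiableAt (by norm_num)).hasFDerivAt).comp_hasDerivAt s hline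
      have hcomp : HasDerivAt (fun s' : ℝ => φ (q s')) (φ1 (q s) * (s / q s)) s :=
        (hφ1HasDeriv (q s) hqs).comp s (hqHas s)
      have heq : (fun s' : ℝ => φ (q s')) =ᶠ[𝓝 s] (fun s' : ℝ => v (t • e₀ + s' • w)) := by
        filter_upwards [hUopen.mem_nhds hs] with s' hs'
        have hqs' : q s' ∈ Ioo (1:ℝ) r := hs'
        have h1 : (t • e₀ + s' • w) ∈ closure Ω :=
          subset_closure ((hmem _).2 (by rw [hnormline s']; exact hqs'))
        have h2 : (q s') • e₀ ∈ closure Ω := hIccmem (q s') ⟨hqs'.1.le, hqs'.2.le⟩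
        exact hsym _ h2 _ h1
          (by rw [hnorm_smul _ _ hnorme₀, abs_of_pos (hq_pos s'), hnormline s'])
      exact hgHas.unique (hcomp.congr_of_eventuallyEq heq.symm)
    rw [second_dir (hCD _ (hIoomem t ht)) w]
    have hAeq : (fun s : ℝ => fderiv ℝ v (t • e₀ + s • w) w) =ᶠ[𝓝 0]
        (fun s : ℝ => φ1 (q s) * (s * (q s)⁻¹)) := by
      filter_upwards [hUopen.mem_nhds hU0] with s hs
      rw [hkey s hs, div_eq_mul_inv]
    rw [hAeq.deriv_eq]
    have hq0' : HasDerivAt q 0 0 := by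
      have h := hqHas 0
      rw [show (0:ℝ) / q 0 = 0 by simp] at h
      exact h
    have hφ1q : HasDerivAt φ1 (φ2 (q 0)) (q 0) := by rw [hq0]; exact hφ1Has t ht
    have hF1 : HasDerivAt (fun s : ℝ => φ1 (q s)) (φ2 (q 0) * 0) 0 := hφ1q.comp 0 hq0'
    have hinv : HasDerivAt (fun s : ℝ => (q s)⁻¹) (-0 / (q 0)^2) 0 := hq0'.inv (hq_pos 0).ne'
    have hF2 : HasDerivAt (fun s : ℝ => s * (q s)⁻¹)
        (1 * (q 0)⁻¹ + 0 * (-0 / (q 0)^2)) 0 := (hasDerivAt_id 0).mul hinv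
    have hprod := hF1.mul hF2
    rw [(show HasDerivAt (fun s : ℝ => φ1 (q s) * (s * (q s)⁻¹)) _ 0 from hprod).deriv, hq0]
    field_simp
    ring
  -- the radial ODE
  have hODE : ∀ t ∈ Ioo (1:ℝ) r, φ2 t + ((k:ℝ)+1) * (φ1 t / t) = f (φ t) := by
    intro t ht
    have h0 : lapl v (t • e₀) = f (φ t) := hlapl _ (hIoomem t ht)
    rw [← h0]
    have hrad : iteratedFDeriv ℝ 2 v (t • e₀) ![e₀, e₀] = φ2 t := by
      rw [second_dir (hCD _ (hIoomem t ht)) e₀]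
      have hfun : (fun s : ℝ => fderiv ℝ v (t • e₀ + s • e₀) e₀) = fun s => φ1 (t + s) := by
        funext s
        rw [← add_smul]
      rw [hfun, deriv_comp_const_add, add_zero]
    have hsum : lapl v (t • e₀) = iteratedFDeriv ℝ 2 v (t • e₀) ![e₀, e₀]
        + ∑ i ∈ ({0}ᶜ : Finset (Fin (k+2))),
            iteratedFDeriv ℝ 2 v (t • e₀)
              ![EuclideanSpace.single i 1, EuclideanSpace.single i 1] := by
      rw [lapl, Fintype.sum_eq_add_sum_compl (0 : Fin (k+2))]
    rw [hsum, hrad]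
    have htangval : ∀ i ∈ ({0}ᶜ : Finset (Fin (k+2))),
        iteratedFDeriv ℝ 2 v (t • e₀)
            ![EuclideanSpace.single i 1, EuclideanSpace.single i 1]
          = φ1 t / t := by
      intro i hi
      have hi0 : i ≠ 0 := by simpa using hi
      refine htang t ht (EuclideanSpace.single i 1) (by simp) ?_
      rw [he₀, EuclideanSpace.inner_single_left]
      simp [EuclideanSpace.single_apply, (Ne.symm hi0)]
    rw [Finset.sum_congr rfl htangval, Finset.sum_const]
    have hcard : ({0}ᶜ : Finset (Fin (k+2))).card = k+1 := by
      rw [Finset.card_compl]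
      simp
    rw [hcard, nsmul_eq_mul]
    push_cast
    ring
  -- the comparison function
  have hρm1 : (1:ℝ) < ρ^(k+1) := one_lt_pow₀ hρ (by omega)
  set B : ℝ := ρ^(k+1) / (ρ^(k+1) - 1) with hBdef
  have hBpos : 0 < B := div_pos (by positivity) (by linarith)
  have hB1 : 1 ≤ B := by
    rw [hBdef, le_div_iff₀ (by linarith)]
    linarith
  set ℓ : ℝ → ℝ := fun u => B * ((u^(k+1))⁻¹ - (ρ^(k+1))⁻¹) with hℓdef
  have hℓ1 : ℓ 1 = 1 := by
    simp only [hℓdef, one_pow, inv_one, hBdef]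
    field_simp
    exact div_self (ne_of_gt (by linarith))
  have hℓρ : ℓ ρ = 0 := by simp [hℓdef]
  set ℓ' : ℝ → ℝ := fun u => B * (-(((k:ℝ)+1) * u^k) / (u^(k+1))^2) with hℓ'def
  have hℓHas : ∀ u : ℝ, u ≠ 0 → HasDerivAt ℓ (ℓ' u) u := by
    intro u hu0
    have h1 := (hasDerivAt_pow (k+1) u).inv (pow_ne_zero _ hu0)
    have h2 := (h1.sub_const ((ρ^(k+1))⁻¹)).const_mul B
    convert (show HasDerivAt ℓ _ u from h2) using 1
    simp only [hℓ'def, Nat.add_sub_cancel]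
    push_cast
    ring
  set ψ' : ℝ → ℝ := fun u => φ1 u - ℓ' u with hψ'def
  have hψHas : ∀ u ∈ Ioo (1:ℝ) r, HasDerivAt (fun z => φ z - ℓ z) (ψ' u) u := fun u hu =>
    (hφ1HasDeriv u hu).sub (hℓHas u (lt_trans one_pos hu.1).ne')
  set W : ℝ → ℝ := fun u => u^(k+1) * φ1 u + (B*((k:ℝ)+1)) * u⁻¹ with hWdef
  have hWψ : ∀ u : ℝ, 0 < u → W u = u^(k+1) * ψ' u := by
    intro u hu0
    simp only [hWdef, hψ'def, hℓ'def]
    field_simp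
    ring
  have hWanti : AntitoneOn W (Ioo 1 ρ) := by
    have hWd : ∀ u ∈ Ioo (1:ℝ) ρ, HasDerivAt W
        ((↑(k+1) * u^(k+1-1)) * φ1 u + u^(k+1) * φ2 u + (B*((k:ℝ)+1)) * (-(u^2)⁻¹)) u := by
      intro u hu
      have hu0 : (0:ℝ) < u := lt_trans one_pos hu.1
      have hur : u ∈ Ioo (1:ℝ) r := ⟨hu.1, lt_trans hu.2 hr⟩
      exact ((hasDerivAt_pow (k+1) u).mul (hφ1Has u hur)).add
        ((hasDerivAt_inv hu0.ne').const_mul (B*((k:ℝ)+1)))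
    apply antitoneOn_of_deriv_nonpos (convex_Ioo 1 ρ)
    · exact fun u hu => (hWd u hu).continuousAt.continuousWithinAt
    · intro u hu
      rw [interior_Ioo] at hu
      exact ((hWd u hu).differentiableAt).differentiableWithinAt
    · intro u hu
      rw [interior_Ioo] at hu
      rw [(hWd u hu).deriv]
      have hu0 : (0:ℝ) < u := lt_trans one_pos hu.1
      have hur : u ∈ Ioo (1:ℝ) r := ⟨hu.1, lt_trans hu.2 hr⟩
      have hode := hODE u hur
      have hfneg := hf0 (φ u)
      have hkey2 : (↑(k+1) * u^(k+1-1)) * φ1 u + u^(k+1) * φ2 u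
          = u^(k+1) * (φ2 u + ((k:ℝ)+1) * (φ1 u / u)) := by
        simp only [Nat.add_sub_cancel]
        push_cast
        field_simp
        ring
      rw [hkey2, hode]
      have h1 : u^(k+1) * f (φ u) ≤ 0 :=
        mul_nonpos_of_nonneg_of_nonpos (by positivity) hfneg
      have h2 : 0 < (B*((k:ℝ)+1)) * (u^2)⁻¹ := by positivity
      linarith
  -- minimum principle: φ ≥ ℓ on (1, ρ)
  have hcore : ∀ t₀ ∈ Ioo (1:ℝ) ρ, ℓ t₀ ≤ φ t₀ := by
    intro t₀ ht₀
    by_contra hcon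
    push_neg at hcon
    have hψ1 : φ 1 - ℓ 1 = 0 := by rw [hφ_1, hℓ1]; ring
    have hψρ : φ ρ - ℓ ρ = 0 := by rw [hφρ, hℓρ]; ring
    have hψcont : ContinuousOn (fun z => φ z - ℓ z) (Icc 1 ρ) := by
      apply ContinuousOn.sub
      · exact hφcont.mono (fun s hs => ⟨hs.1, le_trans hs.2 hr.le⟩)
      · intro s hs
        exact (hℓHas s (lt_of_lt_of_le one_pos hs.1).ne').continuousAt.continuousWithinAt
    obtain ⟨a, ha, hva⟩ := exists_hasDerivAt_eq_slope (fun z => φ z - ℓ z) ψ' ht₀.1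
      (hψcont.mono (fun s hs => ⟨hs.1, le_trans hs.2 ht₀.2.le⟩))
      (fun u hu => hψHas u ⟨hu.1, by linarith [hu.2, ht₀.2, hr]⟩)
    obtain ⟨b, hb, hvb⟩ := exists_hasDerivAt_eq_slope (fun z => φ z - ℓ z) ψ' ht₀.2
      (hψcont.mono (fun s hs => ⟨le_trans ht₀.1.le hs.1, hs.2⟩))
      (fun u hu => hψHas u ⟨lt_trans ht₀.1 hu.1, by linarith [hu.2, hr]⟩)
    have hva' : ψ' a < 0 := by
      rw [hva, hψ1]
      apply div_neg_of_neg_of_pos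
      · simp only [sub_zero]; linarith
      · linarith [ht₀.1]
    have hvb' : 0 < ψ' b := by
      rw [hvb, hψρ]
      apply div_pos
      · simp only [zero_sub, neg_pos]; linarith
      · linarith [ht₀.2]
    have haIoo : a ∈ Ioo (1:ℝ) ρ := ⟨ha.1, lt_trans ha.2 ht₀.2⟩
    have hbIoo : b ∈ Ioo (1:ℝ) ρ := ⟨lt_trans ht₀.1 hb.1, hb.2⟩
    have hab : a ≤ b := le_of_lt (lt_trans ha.2 hb.1)
    have hW := hWanti haIoo hbIoo hab
    have ha0 : (0:ℝ) < a := lt_trans one_pos haIoo.1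
    have hb0 : (0:ℝ) < b := lt_trans one_pos hbIoo.1
    rw [hWψ a ha0, hWψ b hb0] at hW
    linarith [mul_pos (pow_pos hb0 (k+1)) hvb',
      mul_neg_of_pos_of_neg (pow_pos ha0 (k+1)) hva']
  -- explicit lower bound for ℓ
  have hℓlb : ∀ t₀ ∈ Ico (1:ℝ) ρ, (ρ^(k+2))⁻¹ * (ρ - t₀) ≤ ℓ t₀ := by
    intro t₀ ht₀
    have ht₀0 : (0:ℝ) < t₀ := lt_of_lt_of_le one_pos ht₀.1
    set g : ℝ → ℝ := fun u => (u^(k+1))⁻¹ with hgdef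
    set g' : ℝ → ℝ := fun u => -(((k:ℝ)+1) * u^k) / (u^(k+1))^2 with hg'def
    have hgHas : ∀ u : ℝ, 0 < u → HasDerivAt g (g' u) u := by
      intro u hu
      have h1 := (hasDerivAt_pow (k+1) u).inv (pow_ne_zero _ hu.ne')
      convert (show HasDerivAt g _ u from h1) using 1
      simp only [hg'def, Nat.add_sub_cancel]
      push_cast
      ring
    obtain ⟨ξ, hξ, hξval⟩ := exists_hasDerivAt_eq_slope g g' ht₀.2
      (fun u hu => (hgHas u (lt_of_lt_of_le ht₀0 hu.1)).continuousAt.continuousWithinAt)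
      (fun u hu => hgHas u (lt_trans ht₀0 hu.1))
    have hξ0 : (0:ℝ) < ξ := lt_trans ht₀0 hξ.1
    have hξρ : ξ ≤ ρ := hξ.2.le
    have hne : ρ - t₀ ≠ 0 := sub_ne_zero.2 (ne_of_gt ht₀.2)
    have h1 : g t₀ - g ρ = (-(g' ξ)) * (ρ - t₀) := by
      rw [hξval, neg_mul, div_mul_cancel₀ _ hne]
      ring
    have h2 : -(g' ξ) = (((k:ℝ)+1)) / ξ^(k+2) := by
      simp only [hg'def]
      rw [neg_div, neg_neg]
      rw [div_eq_div_iff (by positivity) (by positivity)]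
      ring
    have h3 : 1/ρ^(k+2) ≤ (((k:ℝ)+1)) / ξ^(k+2) := by
      have hle : ξ^(k+2) ≤ ρ^(k+2) := pow_le_pow_left₀ hξ0.le hξρ _
      calc 1/ρ^(k+2) ≤ 1/ξ^(k+2) := by
            apply one_div_le_one_div_of_le (by positivity) hle
        _ ≤ (((k:ℝ)+1)) / ξ^(k+2) := by
            gcongr
            have : (0:ℝ) ≤ (k:ℝ) := Nat.cast_nonneg k
            linarith
    have hrt : 0 ≤ ρ - t₀ := by linarith [ht₀.2]
    have hℓeq : ℓ t₀ = B * ((-(g' ξ)) * (ρ - t₀)) := by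
      rw [← h1]
    rw [hℓeq, h2]
    calc (ρ^(k+2))⁻¹ * (ρ - t₀) = 1 * ((1/ρ^(k+2)) * (ρ - t₀)) := by
          rw [one_div]; ring
      _ ≤ B * ((((k:ℝ)+1)/ξ^(k+2)) * (ρ - t₀)) := by
          apply mul_le_mul hB1 (mul_le_mul_of_nonneg_right h3 hrt)
            (mul_nonneg (by positivity) hrt) (le_of_lt hBpos)
  -- conclusion
  have hxρ : ‖x‖ < ρ := (hpos x hx).1 hvx
  have hx1 : (1:ℝ) ≤ ‖x‖ := by
    have hsubset : closure Ω ⊆ {z : EuclideanSpace ℝ (Fin (k+2)) | 1 ≤ ‖z‖} := by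
      apply closure_minimal
      · intro z hz
        exact le_of_lt ((hmem z).1 hz).1
      · exact isClosed_le continuous_const continuous_norm
    exact hsubset hx
  set t₀ : ℝ := ‖x‖ with ht₀def
  have ht₀0 : (0:ℝ) < t₀ := lt_of_lt_of_le one_pos hx1
  have hvφ : v x = φ t₀ := by
    apply hsym x hx (t₀ • e₀) (hIccmem t₀ ⟨hx1, by linarith [hxρ, hr]⟩)
    rw [hnorm_smul t₀ e₀ hnorme₀, abs_of_pos ht₀0]
  have hφlb : (ρ^(k+2))⁻¹ * (ρ - t₀) ≤ φ t₀ := by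
    rcases eq_or_lt_of_le hx1 with heq | hlt
    · rw [← heq, hφ_1]
      have hρpow : ρ ≤ ρ^(k+2) := le_self_pow₀ hρ.le (by omega)
      rw [inv_mul_le_iff₀ (by positivity)]
      linarith
    · exact le_trans (hℓlb t₀ ⟨hx1, hxρ⟩) (hcore t₀ ⟨hlt, hxρ⟩)
  have hsphere : (ρ / t₀) • x ∈ sphere (0:EuclideanSpace ℝ (Fin (k+2))) ρ := by
    rw [mem_sphere_zero_iff_norm, norm_smul, Real.norm_eq_abs,
      abs_of_pos (by positivity), ← ht₀def]
    field_simp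
  have hdist : infDist x (freeBoundary Ω v) ≤ ρ - t₀ := by
    rw [hFB]
    refine le_trans (infDist_le_dist_of_mem hsphere) ?_
    rw [dist_eq_norm]
    have hxy : x - (ρ/t₀) • x = (1 - ρ/t₀) • x := by
      rw [sub_smul, one_smul]
    rw [hxy, norm_smul, Real.norm_eq_abs, ← ht₀def]
    rw [abs_of_nonpos (by rw [sub_nonpos, le_div_iff₀ ht₀0]; linarith [hxρ])]
    have heq2 : -(1 - ρ/t₀) * t₀ = ρ - t₀ := by field_simp; ring
    rw [heq2]
  rw [hvφ]
  calc (ρ^(k+2))⁻¹ * infDist x (freeBoundary Ω v)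
      ≤ (ρ^(k+2))⁻¹ * (ρ - t₀) :=
        mul_le_mul_of_nonneg_left hdist (by positivity)
    _ ≤ φ t₀ := hφlb
end

section
/- Let n ≥ 2 and 1 < R₁ ≤ R₂, and let u₁ be a continuous function on closure(B_{R₁} \ closure(B_1)) and u₂ a continuous function on closure(B_{R₂} \ closure(B_1)) such that u₁(x) ≤ u₂(x) ≤ u₁(x) + K for all x ∈ B_{R₁} \ closure(B_1), for some constant K > 0. Let F₁ = ∂{u₁ > 0} and F₂ = ∂{u₂ > 0} be their free boundaries, with F₁ ⊆ B_{R₁} \ closure(B_1), and suppose u₂ is non-degenerate: there is c > 0 with u₂(x) ≥ c · dist(x, F₂) for every x with u₂(x) > 0. Then sup_{x ∈ F₁} dist(x, F₂) ≤ K/c. -/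
open Metric Set

theorem stmt_17 (n : ℕ) (hn : 2 ≤ n) (R₁ R₂ : ℝ) (hR₁ : 1 < R₁) (hR₁₂ : R₁ ≤ R₂)
    (Ω₁ Ω₂ : Set (EuclideanSpace ℝ (Fin n)))
    (hΩ₁ : Ω₁ = ball (0 : EuclideanSpace ℝ (Fin n)) R₁ \ closure (ball 0 1))
    (hΩ₂ : Ω₂ = ball (0 : EuclideanSpace ℝ (Fin n)) R₂ \ closure (ball 0 1))
    (u₁ u₂ : EuclideanSpace ℝ (Fin n) → ℝ)
    (hu₁cont : ContinuousOn u₁ (closure Ω₁)) (hu₂cont : ContinuousOn u₂ (closure Ω₂))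
    (K : ℝ) (hK : 0 < K)
    (hord : ∀ x ∈ Ω₁, u₁ x ≤ u₂ x ∧ u₂ x ≤ u₁ x + K)
    (hF₁ : freeBoundary Ω₁ u₁ ⊆ Ω₁)
    (c : ℝ) (hc : 0 < c)
    -- non-degeneracy of `u₂`
    (hnondeg : ∀ x ∈ Ω₂, 0 < u₂ x → c * infDist x (freeBoundary Ω₂ u₂) ≤ u₂ x) :
    ∀ x ∈ freeBoundary Ω₁ u₁, infDist x (freeBoundary Ω₂ u₂) ≤ K / c := by
  intro x hx
  obtain ⟨hxΩ₁, hxfr⟩ := hx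
  have hΩ₁open : IsOpen Ω₁ := by
    rw [hΩ₁]; exact isOpen_ball.sdiff isClosed_closure
  have hΩ₁₂ : Ω₁ ⊆ Ω₂ := by
    rw [hΩ₁, hΩ₂]; exact diff_subset_diff_left (ball_subset_ball hR₁₂)
  -- continuity of u₁ at every point of Ω₁
  have hcontAt : ∀ y ∈ Ω₁, ContinuousAt u₁ y := fun y hy =>
    (hu₁cont y (subset_closure hy)).continuousAt
      (Filter.mem_of_superset (hΩ₁open.mem_nhds hy) subset_closure)
  -- the positivity set is open
  set S : Set (EuclideanSpace ℝ (Fin n)) := {y | y ∈ Ω₁ ∧ 0 < u₁ y} with hS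
  have hSopen : IsOpen S := by
    rw [isOpen_iff_mem_nhds]
    rintro y ⟨hyΩ, hyu⟩
    have h1 : {z | 0 < u₁ z} ∈ nhds y := (hcontAt y hyΩ).preimage_mem_nhds (isOpen_Ioi.mem_nhds hyu)
    filter_upwards [hΩ₁open.mem_nhds hyΩ, h1] with z hz1 hz2 using ⟨hz1, hz2⟩
  -- x is on the frontier of the open set S, hence not in S, so u₁ x ≤ 0
  have hxnotS : x ∉ S := (hSopen.frontier_eq ▸ hxfr).2
  have hu₁x : u₁ x ≤ 0 := by
    by_contra h
    exact hxnotS ⟨hxΩ₁, lt_of_not_ge h⟩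
  have hxcl : x ∈ closure S := hxfr.1
  refine le_of_forall_pos_le_add fun ε hε => ?_
  -- find y ∈ S close to x with u₁ y small
  have hsmall : {z | u₁ z < c * ε / 2} ∈ nhds x :=
    (hcontAt x hxΩ₁).preimage_mem_nhds (isOpen_Iio.mem_nhds
      (lt_of_le_of_lt hu₁x (by positivity)))
  have hball : ball x (ε / 2) ∈ nhds x := ball_mem_nhds x (by positivity)
  obtain ⟨y, hyU, hyS⟩ := mem_closure_iff_nhds.mp hxcl _ (Filter.inter_mem hsmall hball)
  obtain ⟨hyu₁small, hydist⟩ := hyU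
  obtain ⟨hyΩ₁, hyu₁pos⟩ := hyS
  have hyΩ₂ : y ∈ Ω₂ := hΩ₁₂ hyΩ₁
  obtain ⟨hord1, hord2⟩ := hord y hyΩ₁
  have hyu₂pos : 0 < u₂ y := lt_of_lt_of_le hyu₁pos hord1
  have hnd := hnondeg y hyΩ₂ hyu₂pos
  have hinfy : infDist y (freeBoundary Ω₂ u₂) ≤ K / c + ε / 2 := by
    have h2 : infDist y (freeBoundary Ω₂ u₂) ≤ (K + c * ε / 2) / c := by
      rw [le_div_iff₀ hc]
      have hy' : u₁ y < c * ε / 2 := hyu₁small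
      nlinarith [hy', hord2, hnd]
    have h3 : (K + c * ε / 2) / c = K / c + ε / 2 := by field_simp
    linarith [h3 ▸ h2]
  calc infDist x (freeBoundary Ω₂ u₂)
      ≤ infDist y (freeBoundary Ω₂ u₂) + dist x y := infDist_le_infDist_add_dist
    _ ≤ (K / c + ε / 2) + ε / 2 := by
        have : dist x y ≤ ε / 2 := le_of_lt (by rw [dist_comm]; exact mem_ball.mp hydist)
        linarith
    _ = K / c + ε := by ring
end
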